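/- Let k be a commutative ring, A a commutative k-algebra, and (E,Ψ̄), (F,Ψ̿) two left pre-HS-modules over A/k. Then: (1) for every p ∈ ℕ, every nonempty co-ideal Δ ⊆ ℕ^p and every D ∈ HS^p_k(A;Δ), there is a unique k[[s]]_Δ-linear automorphism Ψ^p_Δ(D) of Hom_A(E,F)[[s]]_Δ, congruent to the identity modulo classes of series with zero constant term, such that ν(Ψ^p_Δ(D)(h)) = Ψ̿^p_Δ(D) ∘ ν(h) ∘ Ψ̄^p_Δ(D*) for every h ∈ Hom_A(E,F)[[s]]_Δ, where ν : Hom_A(E,F)[[s]]_Δ → Hom_{k[[s]]_Δ}(E[[s]]_Δ, F[[s]]_Δ) sends h = Σ h_α s^α to the map h̃(Σ e_γ s^γ) = Σ_α (Σ_{β+γ=α} h_β(e_γ)) s^α; (2) the system Ψ = {Ψ^p_Δ} is a left pre-HS-module structure on Hom_A(E,F) over A/k, and it is a HS-module structure whenever Ψ̄ and Ψ̿ are. -/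

import Mathlib

open scoped Classical

namespace HS

/-- multi-indices in `ℕ^p` -/
abbrev MIdx (p : ℕ) := Fin p → ℕ

/-- the total weight `|α|` of a multi-index -/
def wt {p : ℕ} (α : MIdx p) : ℕ := ∑ i, α i

/-- a non-empty co-ideal of `ℕ^p` -/
def IsCoideal {p : ℕ} (Δ : Set (MIdx p)) : Prop :=
  Δ.Nonempty ∧ ∀ ⦃α : MIdx p⦄, α ∈ Δ → ∀ ⦃β : MIdx p⦄, β ≤ α → β ∈ Δ

/-- Convolution product of two power series, given by their coefficient families:
this is the multiplication of `R[[s]]_Δ` (in terms of representatives). -/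
def sconv {p : ℕ} {R : Type*} [NonUnitalNonAssocSemiring R] (f g : MIdx p → R) : MIdx p → R :=
  fun α => ∑ β ∈ Finset.Iic α, f β * g (α - β)

/-- Applying a series of linear operators to a series of module elements; for an
operator family `f`, `fapply f` is the induced `k[[s]]_Δ`-linear map `f̃ = ∑ f_β s^β`. -/
def fapply {p : ℕ} {k M N : Type*} [Semiring k] [AddCommMonoid M] [AddCommMonoid N]
    [Module k M] [Module k N] (f : MIdx p → (M →ₗ[k] N)) (m : MIdx p → M) : MIdx p → N :=
  fun α => ∑ β ∈ Finset.Iic α, f β (m (α - β))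

/-- a series of scalars acting on a series of module elements:
the module structure of `M[[s]]_Δ` over `A[[s]]_Δ` (in terms of representatives). -/
def smul' {p : ℕ} {A M : Type*} [Semiring A] [AddCommMonoid M] [Module A M]
    (a : MIdx p → A) (m : MIdx p → M) : MIdx p → M :=
  fun α => ∑ β ∈ Finset.Iic α, a β • m (α - β)

/-- the unit (delta) series `1` -/
def one' {p : ℕ} {R : Type*} [Zero R] [One R] : MIdx p → R :=
  fun α => if α = 0 then 1 else 0

/-- `D` is a `(p,Δ)`-variate Hasse–Schmidt derivation of `A` over `k`:
`D_0 = id` and the Leibniz rule `D_α(xy) = ∑_{β+γ=α} D_β(x) D_γ(y)` for `α ∈ Δ`. -/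
def IsHS (k A : Type*) [CommRing k] [CommRing A] [Algebra k A] {p : ℕ}
    (Δ : Set (MIdx p)) (D : MIdx p → Module.End k A) : Prop :=
  D 0 = 1 ∧ ∀ α ∈ Δ, ∀ x y : A,
    D α (x * y) = ∑ β ∈ Finset.Iic α, D β x * D (α - β) y

/-- A substitution map `φ : A[[s]]_Δ → A[[t]]_∇`, modelled by the family of its
coefficients `C α e = C_e(φ,α)` (the coefficient of `t^e` in `φ(s^α)`):
it is multiplicative on monomials, unital, of order `≥ 1` (so `C α e = 0` for
`|e| < |α|`), kills the classes of monomials `s^α` with `α ∉ Δ`, and is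
normalized to vanish outside `∇`. -/
structure SubstMap (A : Type*) [CommRing A] (p q : ℕ)
    (Δ : Set (MIdx p)) (nab : Set (MIdx q)) where
  C : MIdx p → MIdx q → A
  c_zero : ∀ e ∈ nab, C 0 e = if e = 0 then 1 else 0
  c_mul : ∀ α ∈ Δ, ∀ β ∈ Δ, ∀ e ∈ nab,
    C (α + β) e = ∑ u ∈ Finset.Iic e, C α u * C β (e - u)
  c_ord : ∀ α ∈ Δ, ∀ e ∈ nab, wt e < wt α → C α e = 0
  c_suppL : ∀ α : MIdx p, α ∉ Δ → ∀ e : MIdx q, C α e = 0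
  c_suppR : ∀ (α : MIdx p) (e : MIdx q), e ∉ nab → C α e = 0

variable {A' : Type*} [CommRing A'] {p' q' : ℕ} {Δ' : Set (MIdx p')} {nab' : Set (MIdx q')}

/-- the map `A[[s]]_Δ → A[[t]]_∇` induced by a substitution map -/
def SubstMap.app (φ : SubstMap A' p' q' Δ' nab') (f : MIdx p' → A') : MIdx q' → A' :=
  fun e => ∑ α ∈ Finset.Iic (fun _ => wt e : MIdx p'), φ.C α e * f α

/-- `φ • D` for a series of `k`-linear endomorphisms of `A` -/
def SubstMap.bulletEnd {k : Type*} [CommRing k] [Algebra k A']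
    (φ : SubstMap A' p' q' Δ' nab') (D : MIdx p' → Module.End k A') :
    MIdx q' → Module.End k A' :=
  fun e => ∑ α ∈ Finset.Iic (fun _ => wt e : MIdx p'), φ.C α e • D α

/-- `φ • r` for a series with coefficients in a `k`-algebra `S` over `A`
(with structural map `ι : A → S`) -/
def SubstMap.bulletS {S : Type*} [Ring S] (ι : A' → S)
    (φ : SubstMap A' p' q' Δ' nab') (r : MIdx p' → S) : MIdx q' → S :=
  fun e => ∑ α ∈ Finset.Iic (fun _ => wt e : MIdx p'), ι (φ.C α e) * r α

/-- `r • φ` for a series with coefficients in a `k`-algebra `S` over `A` -/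
def SubstMap.bulletSR {S : Type*} [Ring S] (ι : A' → S)
    (φ : SubstMap A' p' q' Δ' nab') (r : MIdx p' → S) : MIdx q' → S :=
  fun e => ∑ α ∈ Finset.Iic (fun _ => wt e : MIdx p'), r α * ι (φ.C α e)

/-- `φ • m` for a series with coefficients in an `A`-module `M` -/
def SubstMap.bulletM {M : Type*} [AddCommMonoid M] [Module A' M]
    (φ : SubstMap A' p' q' Δ' nab') (m : MIdx p' → M) : MIdx q' → M :=
  fun e => ∑ α ∈ Finset.Iic (fun _ => wt e : MIdx p'), φ.C α e • m α

/-- `φ` has constant coefficients, i.e. all the `C_e(φ,α)` come from `k` -/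
def SubstMap.HasConstCoeffs (k : Type*) [CommRing k] [Algebra k A']
    (φ : SubstMap A' p' q' Δ' nab') : Prop :=
  ∀ (α : MIdx p') (e : MIdx q'), φ.C α e ∈ Set.range (algebraMap k A')

/-- a system of maps `Ψ^p_Δ : HS^p_k(A;Δ) → U^p(End_k(M);Δ)` as in a
(pre-)HS-module structure on `M` over `A/k` -/
abbrev HSSystem (k A M : Type*) [CommRing k] [CommRing A] [Algebra k A]
    [AddCommMonoid M] [Module k M] : Type _ :=
  ∀ (p : ℕ) (Δ : Set (MIdx p)), (MIdx p → Module.End k A) → (MIdx p → Module.End k M)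

/-- `Ψ` is a left pre-HS-module structure on `M` over `A/k`:  for each `p`, each
non-empty co-ideal `Δ ⊆ ℕ^p` and each `D ∈ HS^p_k(A;Δ)`, the automorphism
`Ψ^p_Δ(D)` of `M[[s]]_Δ` (given by its family of coefficients in `End_k(M)`) has
constant coefficient the identity, depends only on the class of `D`, is
multiplicative in `D`, is invertible, satisfies the Leibniz rule
`Ψ^p_Δ(D)·a = D̃(a)·Ψ^p_Δ(D)`, and is compatible with the action of substitution
maps with constant coefficients:  `Ψ^q_∇(φ•D) = φ•Ψ^p_Δ(D)`. -/
def IsPreHSMod (k A M : Type*) [CommRing k] [CommRing A] [Algebra k A]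
    [AddCommGroup M] [Module k M] [Module A M] [IsScalarTower k A M]
    (Ψ : HSSystem k A M) : Prop :=
  ∀ (p : ℕ) (Δ : Set (MIdx p)), IsCoideal Δ →
    ∀ D : MIdx p → Module.End k A, IsHS k A Δ D →
      (Ψ p Δ D 0 = 1)
      ∧ (∀ D' : MIdx p → Module.End k A, IsHS k A Δ D' → (∀ α ∈ Δ, D α = D' α) →
          ∀ α ∈ Δ, Ψ p Δ D α = Ψ p Δ D' α)
      ∧ (∀ E : MIdx p → Module.End k A, IsHS k A Δ E →
          ∀ α ∈ Δ, Ψ p Δ (sconv D E) α = sconv (Ψ p Δ D) (Ψ p Δ E) α)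
      ∧ (∃ Θ : MIdx p → Module.End k M,
          (∀ α ∈ Δ, sconv (Ψ p Δ D) Θ α = (one' : MIdx p → Module.End k M) α)
          ∧ (∀ α ∈ Δ, sconv Θ (Ψ p Δ D) α = (one' : MIdx p → Module.End k M) α))
      ∧ (∀ (a : MIdx p → A) (m : MIdx p → M), ∀ α ∈ Δ,
          fapply (Ψ p Δ D) (smul' a m) α = smul' (fapply D a) (fapply (Ψ p Δ D) m) α)
      ∧ (∀ (q : ℕ) (nab : Set (MIdx q)), IsCoideal nab →
          ∀ φ : SubstMap A p q Δ nab, φ.HasConstCoeffs k →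
          ∀ e ∈ nab, ∀ x : M,
            Ψ q nab (φ.bulletEnd D) e x
              = ∑ α ∈ Finset.Iic (fun _ => wt e : MIdx p), φ.C α e • Ψ p Δ D α x)

/-- `Ψ` is a left HS-module structure on `M` over `A/k`: as `IsPreHSMod`, but with
compatibility with the action of arbitrary substitution maps. -/
def IsHSMod (k A M : Type*) [CommRing k] [CommRing A] [Algebra k A]
    [AddCommGroup M] [Module k M] [Module A M] [IsScalarTower k A M]
    (Ψ : HSSystem k A M) : Prop :=
  ∀ (p : ℕ) (Δ : Set (MIdx p)), IsCoideal Δ →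
    ∀ D : MIdx p → Module.End k A, IsHS k A Δ D →
      (Ψ p Δ D 0 = 1)
      ∧ (∀ D' : MIdx p → Module.End k A, IsHS k A Δ D' → (∀ α ∈ Δ, D α = D' α) →
          ∀ α ∈ Δ, Ψ p Δ D α = Ψ p Δ D' α)
      ∧ (∀ E : MIdx p → Module.End k A, IsHS k A Δ E →
          ∀ α ∈ Δ, Ψ p Δ (sconv D E) α = sconv (Ψ p Δ D) (Ψ p Δ E) α)
      ∧ (∃ Θ : MIdx p → Module.End k M,
          (∀ α ∈ Δ, sconv (Ψ p Δ D) Θ α = (one' : MIdx p → Module.End k M) α)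
          ∧ (∀ α ∈ Δ, sconv Θ (Ψ p Δ D) α = (one' : MIdx p → Module.End k M) α))
      ∧ (∀ (a : MIdx p → A) (m : MIdx p → M), ∀ α ∈ Δ,
          fapply (Ψ p Δ D) (smul' a m) α = smul' (fapply D a) (fapply (Ψ p Δ D) m) α)
      ∧ (∀ (q : ℕ) (nab : Set (MIdx q)), IsCoideal nab →
          ∀ φ : SubstMap A p q Δ nab,
          ∀ e ∈ nab, ∀ x : M,
            Ψ q nab (φ.bulletEnd D) e x
              = ∑ α ∈ Finset.Iic (fun _ => wt e : MIdx p), φ.C α e • Ψ p Δ D α x)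

/-- the natural map `ν : Hom_A(E,F)[[s]]_Δ → Hom_{k[[s]]_Δ}(E[[s]]_Δ, F[[s]]_Δ)`,
`ν(h) = h̃`, evaluated on a series -/
def happly {A E F : Type*} [CommRing A]
    [AddCommGroup E] [Module A E] [AddCommGroup F] [Module A F] {p : ℕ}
    (h : MIdx p → (E →ₗ[A] F)) (eS : MIdx p → E) : MIdx p → F :=
  fun α => ∑ β ∈ Finset.Iic α, h β (eS (α - β))

set_option maxHeartbeats 1000000
section Toolbox
variable {p : ℕ} {M : Type*} [AddCommMonoid M]

open Finset

lemma zero_mem_coideal {Δ : Set (MIdx p)} (h : IsCoideal Δ) : 0 ∈ Δ := by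
  obtain ⟨⟨α, hα⟩, hc⟩ := h
  exact hc hα (zero_le : (0 : MIdx p) ≤ α)

lemma coideal_mem {Δ : Set (MIdx p)} (h : IsCoideal Δ) {α β : MIdx p} (hα : α ∈ Δ)
    (hβ : β ≤ α) : β ∈ Δ := h.2 hα hβ

lemma coideal_sub_mem {Δ : Set (MIdx p)} (h : IsCoideal Δ) {α : MIdx p} (hα : α ∈ Δ)
    (β : MIdx p) : α - β ∈ Δ := h.2 hα tsub_le_self

lemma wt_add (α β : MIdx p) : wt (α + β) = wt α + wt β := by
  simp [wt, Finset.sum_add_distrib]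

lemma wt_mono {α β : MIdx p} (h : α ≤ β) : wt α ≤ wt β :=
  Finset.sum_le_sum fun i _ => h i

lemma wt_sub_add {α β : MIdx p} (h : β ≤ α) : wt (α - β) + wt β = wt α := by
  rw [← wt_add]; rw [tsub_add_cancel_of_le h]

lemma wt_eq_zero {α : MIdx p} (h : wt α = 0) : α = 0 := by
  funext i
  have := Finset.sum_eq_zero_iff.mp h i (Finset.mem_univ i)
  simpa using this

lemma wt_pos {α : MIdx p} (h : α ≠ 0) : 0 < wt α :=
  Nat.pos_of_ne_zero (fun hc => h (wt_eq_zero hc))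

lemma wt_tsub_lt {α β : MIdx p} (h : β ≤ α) (hβ : β ≠ 0) : wt (α - β) < wt α := by
  have h1 := wt_sub_add h
  have h2 := wt_pos hβ
  omega

lemma wt_lt_of_lt {α β : MIdx p} (h : β ≤ α) (hβ : β ≠ α) : wt β < wt α := by
  have : α - β ≠ 0 := by
    intro hc
    exact hβ (le_antisymm h (by simpa [tsub_eq_zero_iff_le] using hc))
  have := wt_tsub_lt (tsub_le_self : α - β ≤ α) this
  have h2 : α - (α - β) = β := tsub_tsub_cancel_of_le h
  rw [h2] at this
  exact this

/-- reflection of a sum over `Iic α` -/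
lemma L_refl (α : MIdx p) (f : MIdx p → MIdx p → M) :
    ∑ β ∈ Iic α, f β (α - β) = ∑ β ∈ Iic α, f (α - β) β := by
  refine Finset.sum_nbij' (fun β => α - β) (fun β => α - β) ?_ ?_ ?_ ?_ ?_ <;>
    simp only [Finset.mem_Iic]
  · intro a _; exact tsub_le_self
  · intro a _; exact tsub_le_self
  · intro a ha; exact tsub_tsub_cancel_of_le ha
  · intro a ha; exact tsub_tsub_cancel_of_le ha
  · intro a ha; rw [tsub_tsub_cancel_of_le ha]

/-- un-nesting of a double sum -/
lemma L_nest (α : MIdx p) (f : MIdx p → MIdx p → M) :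
    ∑ β ∈ Iic α, ∑ γ ∈ Iic β, f γ (β - γ) = ∑ γ ∈ Iic α, ∑ δ ∈ Iic (α - γ), f γ δ := by
  rw [Finset.sum_sigma' (Iic α) (fun β => Iic β) (fun β γ => f γ (β - γ)),
      Finset.sum_sigma' (Iic α) (fun γ => Iic (α - γ)) (fun γ δ => f γ δ)]
  refine Finset.sum_nbij'
    (fun (x : (_ : MIdx p) × MIdx p) => (⟨x.2, x.1 - x.2⟩ : (_ : MIdx p) × MIdx p))
    (fun (y : (_ : MIdx p) × MIdx p) => (⟨y.1 + y.2, y.1⟩ : (_ : MIdx p) × MIdx p))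
    ?_ ?_ ?_ ?_ ?_
  · rintro ⟨a, b⟩ hx
    rw [Finset.mem_sigma, Finset.mem_Iic, Finset.mem_Iic] at hx
    rw [Finset.mem_sigma, Finset.mem_Iic, Finset.mem_Iic]
    exact ⟨le_trans hx.2 hx.1, tsub_le_tsub_right hx.1 b⟩
  · rintro ⟨a, b⟩ hy
    rw [Finset.mem_sigma, Finset.mem_Iic, Finset.mem_Iic] at hy
    rw [Finset.mem_sigma, Finset.mem_Iic, Finset.mem_Iic]
    refine ⟨?_, le_self_add⟩
    calc a + b ≤ a + (α - a) := add_le_add_right hy.2 a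
      _ = α := add_tsub_cancel_of_le hy.1
  · rintro ⟨a, b⟩ hx
    rw [Finset.mem_sigma, Finset.mem_Iic, Finset.mem_Iic] at hx
    exact Sigma.ext (add_tsub_cancel_of_le hx.2) (heq_of_eq rfl)
  · rintro ⟨a, b⟩ _
    exact Sigma.ext rfl (heq_of_eq (add_tsub_cancel_left a b))
  · rintro ⟨a, b⟩ _; rfl

/-- swapping of a double sum -/
lemma L_swap (α : MIdx p) (f : MIdx p → MIdx p → M) :
    ∑ β ∈ Iic α, ∑ γ ∈ Iic (α - β), f β γ = ∑ γ ∈ Iic α, ∑ β ∈ Iic (α - γ), f β γ := by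
  refine Finset.sum_comm' ?_
  intro x y
  rw [Finset.mem_Iic, Finset.mem_Iic, Finset.mem_Iic, Finset.mem_Iic]
  constructor
  · rintro ⟨hx, hy⟩
    have hxy : x + y ≤ α := by
      calc x + y ≤ x + (α - x) := add_le_add_right hy x
        _ = α := add_tsub_cancel_of_le hx
    refine ⟨?_, le_trans le_add_self hxy⟩
    rw [le_tsub_iff_right (le_trans le_add_self hxy)]
    exact hxy
  · rintro ⟨h1, h2⟩
    have hxy : x + y ≤ α := by
      calc x + y ≤ (α - y) + y := add_le_add_left h1 y
        _ = α := tsub_add_cancel_of_le h2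
    refine ⟨le_trans le_self_add hxy, ?_⟩
    rw [le_tsub_iff_left (le_trans le_self_add hxy)]
    exact hxy

lemma sum_Iic_zero (f : MIdx p → M) : ∑ β ∈ Iic (0 : MIdx p), f β = f 0 := by
  have : Iic (0 : MIdx p) = {0} := by
    ext β; simp [Finset.mem_Iic, le_zero_iff]
  rw [this, Finset.sum_singleton]

/-- collapse at the top index -/
lemma sum_Iic_top (α : MIdx p) (f : MIdx p → M) (h : ∀ β ∈ Iic α, β ≠ α → f β = 0) :
    ∑ β ∈ Iic α, f β = f α :=
  Finset.sum_eq_single_of_mem α (Finset.mem_Iic.2 le_rfl) h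

/-- collapse at the bottom index -/
lemma sum_Iic_bot (α : MIdx p) (f : MIdx p → M) (h : ∀ β ∈ Iic α, β ≠ 0 → f β = 0) :
    ∑ β ∈ Iic α, f β = f 0 :=
  Finset.sum_eq_single_of_mem 0 (Finset.mem_Iic.2 (zero_le : (0 : MIdx p) ≤ α)) h

lemma sub_eq_zero_iff {α β : MIdx p} (h : β ≤ α) : α - β = 0 ↔ β = α := by
  rw [tsub_eq_zero_iff_le]
  exact ⟨fun h' => le_antisymm h h', fun h' => h'.ge⟩

end Toolbox
section Inverse
open Finset
variable {p : ℕ} {R : Type*} [Ring R]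

lemma sconv_one (f : MIdx p → R) (α : MIdx p) : sconv f one' α = f α := by
  unfold sconv
  rw [sum_Iic_top α _ (fun β hβ hne => ?_)]
  · rw [tsub_self]; simp [one']
  · rw [Finset.mem_Iic] at hβ
    have : α - β ≠ 0 := fun hc => hne ((sub_eq_zero_iff hβ).mp hc)
    simp [one', this]

lemma one'_sconv (f : MIdx p → R) (α : MIdx p) : sconv one' f α = f α := by
  unfold sconv
  rw [sum_Iic_bot α _ (fun β _ hne => ?_)]
  · simp [one']
  · simp [one', hne]

lemma sconv_assoc (f g h : MIdx p → R) (α : MIdx p) :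
    sconv (sconv f g) h α = sconv f (sconv g h) α := by
  unfold sconv
  have step1 : ∀ β ∈ Iic α, (∑ γ ∈ Iic β, f γ * g (β - γ)) * h (α - β)
      = ∑ γ ∈ Iic β, (fun γ δ => f γ * g δ * h (α - γ - δ)) γ (β - γ) := by
    intro β hβ
    rw [Finset.sum_mul]
    refine Finset.sum_congr rfl fun γ hγ => ?_
    rw [Finset.mem_Iic] at hγ
    have : α - γ - (β - γ) = α - β := by
      rw [tsub_tsub, add_tsub_cancel_of_le hγ]
    dsimp only
    rw [this]
  rw [Finset.sum_congr rfl step1, L_nest α (fun γ δ => f γ * g δ * h (α - γ - δ))]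
  refine Finset.sum_congr rfl fun γ _ => ?_
  rw [Finset.mul_sum]
  exact Finset.sum_congr rfl fun δ _ => by rw [mul_assoc]

/-- the canonical (right) inverse of a unit series -/
def hsInv (f : MIdx p → R) : MIdx p → R := fun α =>
  if h : α = 0 then 1
  else - ∑ β ∈ ((Finset.Iic α).erase 0).attach, f β.1 * hsInv f (α - β.1)
termination_by α => wt α
decreasing_by
  rcases Finset.mem_erase.mp β.2 with ⟨hne, hle⟩
  exact wt_tsub_lt (Finset.mem_Iic.mp hle) hne

lemma hsInv_zero (f : MIdx p → R) : hsInv f 0 = 1 := by rw [hsInv, dif_pos rfl]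

lemma hsInv_ne (f : MIdx p → R) {α : MIdx p} (h : α ≠ 0) :
    hsInv f α = - ∑ β ∈ ((Finset.Iic α).erase 0), f β * hsInv f (α - β) := by
  rw [hsInv]
  rw [dif_neg h, Finset.sum_attach ((Finset.Iic α).erase 0) (fun β => f β * hsInv f (α - β))]

lemma sconv_hsInv {f : MIdx p → R} (hf : f 0 = 1) (α : MIdx p) :
    sconv f (hsInv f) α = one' α := by
  by_cases h0 : α = 0
  · subst h0
    unfold sconv
    rw [sum_Iic_zero]
    simp [hf, hsInv_zero, one']
  · unfold sconv
    rw [← Finset.add_sum_erase _ _ (Finset.mem_Iic.2 (zero_le : (0 : MIdx p) ≤ α))]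
    rw [tsub_zero, hf, one_mul, hsInv_ne f h0]
    simp [one', h0]

/-- auxiliary left inverse -/
def hsInvL (f : MIdx p → R) : MIdx p → R := fun α =>
  if h : α = 0 then 1
  else - ∑ β ∈ ((Finset.Iic α).erase α).attach, hsInvL f β.1 * f (α - β.1)
termination_by α => wt α
decreasing_by
  rcases Finset.mem_erase.mp β.2 with ⟨hne, hle⟩
  exact wt_lt_of_lt (Finset.mem_Iic.mp hle) hne

lemma hsInvL_ne (f : MIdx p → R) {α : MIdx p} (h : α ≠ 0) :
    hsInvL f α = - ∑ β ∈ ((Finset.Iic α).erase α), hsInvL f β * f (α - β) := by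
  rw [hsInvL]
  rw [dif_neg h, Finset.sum_attach ((Finset.Iic α).erase α) (fun β => hsInvL f β * f (α - β))]

lemma hsInvL_sconv {f : MIdx p → R} (hf : f 0 = 1) (α : MIdx p) :
    sconv (hsInvL f) f α = one' α := by
  by_cases h0 : α = 0
  · subst h0
    unfold sconv
    rw [sum_Iic_zero]
    have : hsInvL f (0:MIdx p) = 1 := by rw [hsInvL, dif_pos rfl]
    simp [hf, this, one']
  · unfold sconv
    rw [← Finset.sum_erase_add _ _ (Finset.mem_Iic.2 (le_refl α))]
    rw [tsub_self, hf, mul_one, hsInvL_ne f h0]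
    simp [one', h0]

/-- uniqueness of two-sided inverses -/
lemma eq_hsInv {f g : MIdx p → R} (hf : f 0 = 1)
    (hg : ∀ α, sconv g f α = one' α) : g = hsInv f := by
  funext α
  calc g α = sconv g one' α := (sconv_one g α).symm
    _ = sconv g (sconv f (hsInv f)) α := by
        rw [show (sconv f (hsInv f)) = (one' : MIdx p → R) from funext (sconv_hsInv hf)]
    _ = sconv (sconv g f) (hsInv f) α := (sconv_assoc g f (hsInv f) α).symm
    _ = sconv one' (hsInv f) α := by
        rw [show (sconv g f) = (one' : MIdx p → R) from funext hg]
    _ = hsInv f α := one'_sconv (hsInv f) α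

lemma hsInv_sconv {f : MIdx p → R} (hf : f 0 = 1) (α : MIdx p) :
    sconv (hsInv f) f α = one' α := by
  rw [← eq_hsInv hf (hsInvL_sconv hf)]
  exact hsInvL_sconv hf α

lemma hsInv_zero' {f : MIdx p → R} : hsInv f 0 = 1 := hsInv_zero f

end Inverse
section Shapes
open Finset
variable {p : ℕ} {M : Type*} [AddCommMonoid M]

lemma sub_sub_cancel' {α β u : MIdx p} (hu : u ≤ β) : α - u - (β - u) = α - β := by
  rw [tsub_tsub, add_tsub_cancel_of_le hu]

/-- triple sum, nested form to canonical form -/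
lemma tri1 (α : MIdx p) (G : MIdx p → MIdx p → MIdx p → M) :
    ∑ β ∈ Iic α, ∑ γ ∈ Iic β, G γ (β - γ) (α - β)
      = ∑ a ∈ Iic α, ∑ b ∈ Iic (α - a), G a b (α - a - b) := by
  calc ∑ β ∈ Iic α, ∑ γ ∈ Iic β, G γ (β - γ) (α - β)
      = ∑ β ∈ Iic α, ∑ γ ∈ Iic β, (fun a b => G a b (α - a - b)) γ (β - γ) := by
        refine sum_congr rfl fun β _ => sum_congr rfl fun γ hγ => ?_
        dsimp only
        rw [sub_sub_cancel' (mem_Iic.mp hγ)]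
    _ = _ := L_nest α (fun a b => G a b (α - a - b))

/-- quadruple sum: pairs grouped as `(a,b)(c,d)` -/
lemma quad1 (α : MIdx p) (G : MIdx p → MIdx p → MIdx p → MIdx p → M) :
    ∑ δ ∈ Iic α, ∑ u ∈ Iic δ, ∑ v ∈ Iic (α - δ), G u (δ - u) v (α - δ - v)
      = ∑ a ∈ Iic α, ∑ b ∈ Iic (α - a), ∑ c ∈ Iic (α - a - b), G a b c (α - a - b - c) := by
  calc ∑ δ ∈ Iic α, ∑ u ∈ Iic δ, ∑ v ∈ Iic (α - δ), G u (δ - u) v (α - δ - v)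
      = ∑ δ ∈ Iic α, ∑ u ∈ Iic δ,
          (fun a b => ∑ c ∈ Iic (α - a - b), G a b c (α - a - b - c)) u (δ - u) := by
        refine sum_congr rfl fun δ _ => sum_congr rfl fun u hu => ?_
        dsimp only
        rw [sub_sub_cancel' (mem_Iic.mp hu)]
    _ = _ := L_nest α (fun a b => ∑ c ∈ Iic (α - a - b), G a b c (α - a - b - c))

/-- quadruple sum: nested-application form -/
lemma quad2 (α : MIdx p) (G : MIdx p → MIdx p → MIdx p → MIdx p → M) :
    ∑ β ∈ Iic α, ∑ γ ∈ Iic (α - β), ∑ u ∈ Iic β, G u (β - u) γ (α - β - γ)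
      = ∑ a ∈ Iic α, ∑ b ∈ Iic (α - a), ∑ c ∈ Iic (α - a - b), G a b c (α - a - b - c) := by
  calc ∑ β ∈ Iic α, ∑ γ ∈ Iic (α - β), ∑ u ∈ Iic β, G u (β - u) γ (α - β - γ)
      = ∑ β ∈ Iic α, ∑ u ∈ Iic β, ∑ γ ∈ Iic (α - β), G u (β - u) γ (α - β - γ) := by
        refine sum_congr rfl fun β _ => ?_
        exact Finset.sum_comm
    _ = ∑ β ∈ Iic α, ∑ u ∈ Iic β,
          (fun a b => ∑ c ∈ Iic (α - a - b), G a b c (α - a - b - c)) u (β - u) := by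
        refine sum_congr rfl fun β _ => sum_congr rfl fun u hu => ?_
        dsimp only
        rw [sub_sub_cancel' (mem_Iic.mp hu)]
    _ = _ := L_nest α (fun a b => ∑ c ∈ Iic (α - a - b), G a b c (α - a - b - c))

/-- canonical quadruple sums are invariant under swapping the middle arguments -/
lemma canon_swap (α : MIdx p) (G : MIdx p → MIdx p → MIdx p → MIdx p → M) :
    ∑ a ∈ Iic α, ∑ b ∈ Iic (α - a), ∑ c ∈ Iic (α - a - b), G a c b (α - a - b - c)
      = ∑ a ∈ Iic α, ∑ b ∈ Iic (α - a), ∑ c ∈ Iic (α - a - b), G a b c (α - a - b - c) := by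
  refine sum_congr rfl fun a _ => ?_
  calc ∑ b ∈ Iic (α - a), ∑ c ∈ Iic (α - a - b), G a c b (α - a - b - c)
      = ∑ b ∈ Iic (α - a), ∑ c ∈ Iic (α - a - b), G a c b (α - a - (b + c)) := by
        refine sum_congr rfl fun b _ => sum_congr rfl fun c _ => ?_
        rw [tsub_tsub]
    _ = ∑ c ∈ Iic (α - a), ∑ b ∈ Iic (α - a - c), G a c b (α - a - (b + c)) :=
        L_swap (α - a) (fun b c => G a c b (α - a - (b + c)))
    _ = ∑ b ∈ Iic (α - a), ∑ c ∈ Iic (α - a - b), G a b c (α - a - b - c) := by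
        refine sum_congr rfl fun b _ => sum_congr rfl fun c _ => ?_
        congr 1
        funext i
        simp only [Pi.sub_apply, Pi.add_apply]
        omega

/-- quadruple sum: pairs grouped as `(a,c)(b,d)` -/
lemma quad3 (α : MIdx p) (G : MIdx p → MIdx p → MIdx p → MIdx p → M) :
    ∑ δ ∈ Iic α, ∑ u ∈ Iic δ, ∑ v ∈ Iic (α - δ), G u v (δ - u) (α - δ - v)
      = ∑ a ∈ Iic α, ∑ b ∈ Iic (α - a), ∑ c ∈ Iic (α - a - b), G a b c (α - a - b - c) := by
  have h1 := quad1 α (fun a b c d => G a c b d)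
  exact h1.trans (canon_swap α G)

/-- quadruple sum: telescope form -/
lemma quad4 (α : MIdx p) (G : MIdx p → MIdx p → MIdx p → MIdx p → M) :
    ∑ β ∈ Iic α, ∑ γ ∈ Iic β, ∑ u ∈ Iic γ, G u (γ - u) (β - γ) (α - β)
      = ∑ a ∈ Iic α, ∑ b ∈ Iic (α - a), ∑ c ∈ Iic (α - a - b), G a b c (α - a - b - c) := by
  calc ∑ β ∈ Iic α, ∑ γ ∈ Iic β, ∑ u ∈ Iic γ, G u (γ - u) (β - γ) (α - β)
      = ∑ β ∈ Iic α, ∑ γ ∈ Iic β,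
          (fun g e => ∑ u ∈ Iic g, G u (g - u) e (α - g - e)) γ (β - γ) := by
        refine sum_congr rfl fun β _ => sum_congr rfl fun γ hγ => ?_
        dsimp only
        rw [sub_sub_cancel' (mem_Iic.mp hγ)]
    _ = ∑ γ ∈ Iic α, ∑ e ∈ Iic (α - γ), ∑ u ∈ Iic γ, G u (γ - u) e (α - γ - e) :=
        L_nest α (fun g e => ∑ u ∈ Iic g, G u (g - u) e (α - g - e))
    _ = ∑ γ ∈ Iic α, ∑ u ∈ Iic γ, ∑ e ∈ Iic (α - γ), G u (γ - u) e (α - γ - e) := by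
        refine sum_congr rfl fun γ _ => ?_
        exact Finset.sum_comm
    _ = ∑ γ ∈ Iic α, ∑ u ∈ Iic γ,
          (fun a b => ∑ c ∈ Iic (α - a - b), G a b c (α - a - b - c)) u (γ - u) := by
        refine sum_congr rfl fun γ _ => sum_congr rfl fun u hu => ?_
        dsimp only
        rw [sub_sub_cancel' (mem_Iic.mp hu)]
    _ = _ := L_nest α (fun a b => ∑ c ∈ Iic (α - a - b), G a b c (α - a - b - c))

end Shapes
section Derivations
open Finset
variable {p : ℕ} {k A : Type*} [CommRing k] [CommRing A] [Algebra k A]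
variable {Δ : Set (MIdx p)}

lemma sconv_apply {M : Type*} [AddCommGroup M] [Module k M]
    (f g : MIdx p → Module.End k M) (α : MIdx p) (x : M) :
    sconv f g α x = ∑ β ∈ Iic α, f β (g (α - β) x) := by
  unfold sconv
  rw [LinearMap.sum_apply]
  exact sum_congr rfl fun β _ => rfl

lemma one'_apply {M : Type*} [AddCommGroup M] [Module k M] (α : MIdx p) (x : M) :
    (one' : MIdx p → Module.End k M) α x = if α = 0 then x else 0 := by
  unfold one'
  split <;> simp

lemma one'_isHS (hΔ : IsCoideal Δ) : IsHS k A Δ one' := by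
  refine ⟨by simp [one'], fun α hα x y => ?_⟩
  by_cases h0 : α = 0
  · subst h0
    rw [sum_Iic_zero]
    simp [one'_apply]
  · rw [one'_apply, if_neg h0]
    symm
    apply Finset.sum_eq_zero
    intro β hβ
    by_cases hb : β = 0
    · subst hb
      rw [tsub_zero]
      rw [show ((one' : MIdx p → Module.End k A) α) y = 0 from by rw [one'_apply, if_neg h0]]
      rw [mul_zero]
    · rw [show ((one' : MIdx p → Module.End k A) β) x = 0 from by rw [one'_apply, if_neg hb]]
      rw [zero_mul]

lemma isHS_sconv {D E : MIdx p → Module.End k A} (hΔ : IsCoideal Δ)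
    (hD : IsHS k A Δ D) (hE : IsHS k A Δ E) : IsHS k A Δ (sconv D E) := by
  constructor
  · show sconv D E 0 = 1
    unfold sconv
    rw [sum_Iic_zero]
    simp [hD.1, hE.1]
  · intro α hα x y
    have hstep : sconv D E α (x*y) = ∑ β ∈ Iic α, ∑ γ ∈ Iic (α - β), ∑ u ∈ Iic β,
        D u (E γ x) * D (β - u) (E (α - β - γ) y) := by
      rw [sconv_apply]
      refine sum_congr rfl fun β hβ => ?_
      rw [hE.2 (α - β) (coideal_sub_mem hΔ hα β) x y, map_sum]
      refine sum_congr rfl fun γ _ => ?_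
      exact hD.2 β (coideal_mem hΔ hα (mem_Iic.mp hβ)) _ _
    have hR : ∑ δ ∈ Iic α, sconv D E δ x * sconv D E (α - δ) y
        = ∑ δ ∈ Iic α, ∑ u ∈ Iic δ, ∑ v ∈ Iic (α - δ),
            D u (E (δ - u) x) * D v (E (α - δ - v) y) := by
      refine sum_congr rfl fun δ _ => ?_
      rw [sconv_apply, sconv_apply, Finset.sum_mul_sum]
    rw [hstep, hR]
    have h1 := quad2 α (fun a b c d => D a (E c x) * D b (E d y))
    have h2 := quad3 α (fun a b c d => D a (E c x) * D b (E d y))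
    exact h1.trans h2.symm

lemma hsInv_congr {D D' : MIdx p → Module.End k A} (hΔ : IsCoideal Δ)
    (h : ∀ α ∈ Δ, D α = D' α) : ∀ α ∈ Δ, hsInv D α = hsInv D' α := by
  have H : ∀ n (α : MIdx p), wt α = n → α ∈ Δ → hsInv D α = hsInv D' α := by
    intro n
    induction n using Nat.strong_induction_on with
    | _ n ih =>
      intro α hwtα hα
      by_cases h0 : α = 0
      · subst h0; rw [hsInv_zero, hsInv_zero]
      · rw [hsInv_ne D h0, hsInv_ne D' h0]
        congr 1
        refine sum_congr rfl fun β hβ => ?_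
        obtain ⟨hne, hle⟩ := Finset.mem_erase.mp hβ
        rw [mem_Iic] at hle
        rw [h β (coideal_mem hΔ hα hle),
          ih (wt (α - β)) (hwtα ▸ wt_tsub_lt hle hne) (α - β) rfl (coideal_sub_mem hΔ hα β)]
  exact fun α hα => H (wt α) α rfl hα

lemma isHS_hsInv {D : MIdx p → Module.End k A} (hΔ : IsCoideal Δ)
    (hD : IsHS k A Δ D) : IsHS k A Δ (hsInv D) := by
  refine ⟨hsInv_zero D, ?_⟩
  set Ds := hsInv D with hDsdef
  have key : ∀ (x y : A), ∀ δ ∈ Δ,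
      Ds δ (x * y) - ∑ β ∈ Iic δ, Ds β x * Ds (δ - β) y = 0 := by
    intro x y
    set T : MIdx p → A := fun δ => Ds δ (x * y) - ∑ β ∈ Iic δ, Ds β x * Ds (δ - β) y with hT
    -- the claim C
    have hC : ∀ δ ∈ Δ, ∑ γ ∈ Iic δ, D γ (T (δ - γ)) = 0 := by
      intro δ hδ
      have expand : ∀ γ ∈ Iic δ, D γ (T (δ - γ))
          = D γ (Ds (δ - γ) (x * y)) - ∑ β ∈ Iic (δ - γ), ∑ u ∈ Iic γ,
              D u (Ds β x) * D (γ - u) (Ds (δ - γ - β) y) := by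
        intro γ hγ
        rw [hT]
        dsimp only
        rw [map_sub, map_sum]
        congr 1
        refine sum_congr rfl fun β _ => ?_
        exact hD.2 γ (coideal_mem hΔ hδ (mem_Iic.mp hγ)) _ _
      rw [sum_congr rfl expand, Finset.sum_sub_distrib]
      have hA : ∑ γ ∈ Iic δ, D γ (Ds (δ - γ) (x * y)) = if δ = 0 then x * y else 0 := by
        rw [← sconv_apply, sconv_hsInv hD.1, one'_apply]
      have hB : ∑ γ ∈ Iic δ, ∑ β ∈ Iic (δ - γ), ∑ u ∈ Iic γ,
          D u (Ds β x) * D (γ - u) (Ds (δ - γ - β) y) = if δ = 0 then x * y else 0 := by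
        have h1 := quad2 δ (fun a b c d => D a (Ds c x) * D b (Ds d y))
        have h2 := quad3 δ (fun a b c d => D a (Ds c x) * D b (Ds d y))
        rw [h1, ← h2]
        have h3 : ∀ σ ∈ Iic δ, ∑ u ∈ Iic σ, ∑ v ∈ Iic (δ - σ),
            D u (Ds (σ - u) x) * D v (Ds (δ - σ - v) y)
            = sconv D Ds σ x * sconv D Ds (δ - σ) y := by
          intro σ _
          rw [sconv_apply, sconv_apply, Finset.sum_mul_sum]
        rw [sum_congr rfl h3]
        have h4 : ∀ σ ∈ Iic δ, sconv D Ds σ x * sconv D Ds (δ - σ) y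
            = (if σ = 0 then x else 0) * (if δ - σ = 0 then y else 0) := by
          intro σ _
          rw [sconv_hsInv hD.1, sconv_hsInv hD.1, one'_apply, one'_apply]
        rw [sum_congr rfl h4]
        by_cases h0 : δ = 0
        · subst h0
          rw [sum_Iic_zero]
          simp
        · rw [if_neg h0]
          apply Finset.sum_eq_zero
          intro σ hσ
          by_cases hs : σ = 0
          · subst hs
            rw [tsub_zero, if_neg h0, mul_zero]
          · rw [if_neg hs, zero_mul]
      rw [hA, hB, sub_self]
    -- conclude T = 0 on Δ
    intro δ hδ
    show T δ = 0
    have e1 : T δ = ∑ β ∈ Iic δ, (one' : MIdx p → Module.End k A) β (T (δ - β)) := by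
      rw [sum_Iic_bot δ _ (fun β _ hne => by rw [one'_apply, if_neg hne])]
      rw [one'_apply, if_pos rfl, tsub_zero]
    have e2 : ∀ β ∈ Iic δ, (one' : MIdx p → Module.End k A) β (T (δ - β))
        = ∑ u ∈ Iic β, Ds u (D (β - u) (T (δ - β))) := by
      intro β _
      rw [← sconv_apply, hsInv_sconv hD.1]
    rw [e1, sum_congr rfl e2]
    rw [tri1 δ (fun a b c => Ds a (D b (T c)))]
    have e3 : ∀ a ∈ Iic δ, ∑ b ∈ Iic (δ - a), Ds a (D b (T (δ - a - b))) = 0 := by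
      intro a _
      rw [← map_sum]
      rw [hC (δ - a) (coideal_sub_mem hΔ hδ a)]
      exact map_zero _
    rw [sum_congr rfl e3, Finset.sum_const_zero]
  intro α hα x y
  exact sub_eq_zero.mp (key x y α hα)

end Derivations
section Subst
open Finset
variable {p q : ℕ} {k A : Type*} [CommRing k] [CommRing A] [Algebra k A]
variable {Δ : Set (MIdx p)} {nab : Set (MIdx q)}

lemma wt_zero : wt (0 : MIdx p) = 0 := by simp [wt]

lemma const_wt_zero : ((fun _ => wt (0 : MIdx q)) : MIdx p) = 0 := by
  funext i
  simp [wt]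

lemma wt_le_of_mem_IicB {e : MIdx q} {β : MIdx p} (h : β ∈ Iic ((fun _ => wt e) : MIdx p))
    (i : Fin p) : β i ≤ wt e := (Finset.mem_Iic.mp h) i

lemma single_le_wt (β : MIdx p) (i : Fin p) : β i ≤ wt β :=
  Finset.single_le_sum (f := β) (fun _ _ => Nat.zero_le _) (Finset.mem_univ i)

lemma c_vanish (φ : SubstMap A p q Δ nab) (hΔ : IsCoideal Δ) {u : MIdx q}
    (hu : u ∈ nab) {β : MIdx p} (h : wt u < wt β) : φ.C β u = 0 := by
  by_cases hβ : β ∈ Δ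
  · exact φ.c_ord β hβ u hu h
  · exact φ.c_suppL β hβ u

lemma c_vanish_not_le (φ : SubstMap A p q Δ nab) (hΔ : IsCoideal Δ) {u : MIdx q}
    (hu : u ∈ nab) {β : MIdx p} (h : ¬ β ≤ ((fun _ => wt u) : MIdx p)) : φ.C β u = 0 := by
  apply c_vanish φ hΔ hu
  obtain ⟨i, hi⟩ : ∃ i, ¬ β i ≤ wt u := by
    by_contra hc
    push_neg at hc
    exact h (fun i => hc i)
  exact lt_of_lt_of_le (Nat.lt_of_not_le hi) (single_le_wt β i)

lemma c_mul' (φ : SubstMap A p q Δ nab) (hΔ : IsCoideal Δ) {e : MIdx q} (he : e ∈ nab)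
    (β γ : MIdx p) : (∑ u ∈ Iic e, φ.C β u * φ.C γ (e - u)) = φ.C (β + γ) e := by
  by_cases hβ : β ∈ Δ
  · by_cases hγ : γ ∈ Δ
    · exact (φ.c_mul β hβ γ hγ e he).symm
    · rw [φ.c_suppL (β + γ) (fun hc => hγ (coideal_mem hΔ hc le_add_self)) e]
      exact Finset.sum_eq_zero fun u _ => by rw [φ.c_suppL γ hγ, mul_zero]
  · rw [φ.c_suppL (β + γ) (fun hc => hβ (coideal_mem hΔ hc le_self_add)) e]
    exact Finset.sum_eq_zero fun u _ => by rw [φ.c_suppL β hβ, zero_mul]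

lemma subst_collapse (φ : SubstMap A p q Δ nab) (hΔ : IsCoideal Δ) (hnab : IsCoideal nab)
    {M : Type*} [AddCommMonoid M] [Module A M]
    {e : MIdx q} (he : e ∈ nab) (T : MIdx p → MIdx p → M) :
    ∑ u ∈ Iic e, ∑ β ∈ Iic ((fun _ => wt u) : MIdx p),
        ∑ γ ∈ Iic ((fun _ => wt (e - u)) : MIdx p), (φ.C β u * φ.C γ (e - u)) • T β γ
      = ∑ β ∈ Iic ((fun _ => wt e) : MIdx p), ∑ γ ∈ Iic (((fun _ => wt e) : MIdx p) - β),
          φ.C (β + γ) e • T β γ := by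
  set B : MIdx p := (fun _ => wt e) with hB
  -- step 1: extend the inner ranges
  have step1 : ∀ u ∈ Iic e,
      ∑ β ∈ Iic ((fun _ => wt u) : MIdx p), ∑ γ ∈ Iic ((fun _ => wt (e - u)) : MIdx p),
          (φ.C β u * φ.C γ (e - u)) • T β γ
      = ∑ β ∈ Iic B, ∑ γ ∈ Iic B, (φ.C β u * φ.C γ (e - u)) • T β γ := by
    intro u hu
    rw [mem_Iic] at hu
    have hu' : u ∈ nab := coideal_mem hnab he hu
    have heu' : e - u ∈ nab := coideal_sub_mem hnab he u
    have hsub1 : Iic ((fun _ => wt u) : MIdx p) ⊆ Iic B :=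
      Finset.Iic_subset_Iic.mpr (fun i => wt_mono hu)
    have hsub2 : Iic ((fun _ => wt (e - u)) : MIdx p) ⊆ Iic B :=
      Finset.Iic_subset_Iic.mpr (fun i => wt_mono (tsub_le_self : e - u ≤ e))
    rw [Finset.sum_subset hsub1 (fun β _ hβ => ?_)]
    · refine sum_congr rfl fun β _ => ?_
      rw [Finset.sum_subset hsub2 (fun γ _ hγ => ?_)]
      rw [c_vanish_not_le φ hΔ heu' (fun hc => hγ (mem_Iic.mpr hc)), mul_zero, zero_smul]
    · apply Finset.sum_eq_zero
      intro γ _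
      rw [c_vanish_not_le φ hΔ hu' (fun hc => hβ (mem_Iic.mpr hc)), zero_mul, zero_smul]
  rw [sum_congr rfl step1]
  -- step 2: move the u-sum inside
  rw [Finset.sum_comm]
  have step2 : ∀ β ∈ Iic B,
      ∑ u ∈ Iic e, ∑ γ ∈ Iic B, (φ.C β u * φ.C γ (e - u)) • T β γ
      = ∑ γ ∈ Iic B, φ.C (β + γ) e • T β γ := by
    intro β hβ
    rw [Finset.sum_comm]
    refine sum_congr rfl fun γ _ => ?_
    rw [← Finset.sum_smul, c_mul' φ hΔ he β γ]
  rw [sum_congr rfl step2]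
  -- step 3: restrict the γ-range
  refine sum_congr rfl fun β hβ => ?_
  symm
  apply Finset.sum_subset (Finset.Iic_subset_Iic.mpr (tsub_le_self : B - β ≤ B))
  intro γ _ hγ
  have hwt : wt e < wt (β + γ) := by
    obtain ⟨i, hi⟩ : ∃ i, ¬ γ i ≤ B i - β i := by
      by_contra hc
      push_neg at hc
      exact hγ (mem_Iic.mpr (fun i => hc i))
    have hβi : β i ≤ wt e := wt_le_of_mem_IicB hβ i
    have h1 : wt e < β i + γ i := by
      have : B i - β i < γ i := Nat.lt_of_not_le hi
      have hBi : B i = wt e := rfl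
      omega
    calc wt e < β i + γ i := h1
      _ = (β + γ) i := rfl
      _ ≤ wt (β + γ) := single_le_wt _ i
  rw [c_vanish φ hΔ he hwt, zero_smul]

lemma bulletEnd_apply {D : MIdx p → Module.End k A} (φ : SubstMap A p q Δ nab)
    (e : MIdx q) (x : A) :
    φ.bulletEnd D e x = ∑ α ∈ Iic ((fun _ => wt e) : MIdx p), φ.C α e • D α x := by
  unfold SubstMap.bulletEnd
  rw [LinearMap.sum_apply]
  exact sum_congr rfl fun α _ => rfl

lemma isHS_bulletEnd {D : MIdx p → Module.End k A} (φ : SubstMap A p q Δ nab)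
    (hΔ : IsCoideal Δ) (hnab : IsCoideal nab) (hD : IsHS k A Δ D) :
    IsHS k A nab (φ.bulletEnd D) := by
  constructor
  · apply LinearMap.ext
    intro x
    rw [bulletEnd_apply, const_wt_zero, sum_Iic_zero]
    rw [φ.c_zero 0 (zero_mem_coideal hnab), if_pos rfl, hD.1]
    simp
  · intro e he x y
    set B : MIdx p := (fun _ => wt e) with hB
    have hL : φ.bulletEnd D e (x * y)
        = ∑ β ∈ Iic B, ∑ γ ∈ Iic (B - β), φ.C (β + γ) e • (D β x * D γ y) := by
      rw [bulletEnd_apply]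
      have h1 : ∀ α ∈ Iic B, φ.C α e • D α (x * y)
          = ∑ β ∈ Iic α, φ.C α e • (D β x * D (α - β) y) := by
        intro α _
        by_cases hα : α ∈ Δ
        · rw [hD.2 α hα x y, Finset.smul_sum]
        · rw [φ.c_suppL α hα e, zero_smul]
          exact (Finset.sum_eq_zero fun β _ => zero_smul _ _).symm
      rw [sum_congr rfl h1]
      have h2 : ∀ α ∈ Iic B, ∀ β ∈ Iic α, φ.C α e • (D β x * D (α - β) y)
          = (fun a b => φ.C (a + b) e • (D a x * D b y)) β (α - β) := by
        intro α _ β hβ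
        dsimp only
        rw [add_tsub_cancel_of_le (mem_Iic.mp hβ)]
      rw [sum_congr rfl (fun α hα => sum_congr rfl (h2 α hα))]
      exact L_nest B (fun a b => φ.C (a + b) e • (D a x * D b y))
    rw [hL]
    have hR : ∀ u ∈ Iic e, φ.bulletEnd D u x * φ.bulletEnd D (e - u) y
        = ∑ β ∈ Iic ((fun _ => wt u) : MIdx p), ∑ γ ∈ Iic ((fun _ => wt (e - u)) : MIdx p),
            (φ.C β u * φ.C γ (e - u)) • (D β x * D γ y) := by
      intro u _
      rw [bulletEnd_apply, bulletEnd_apply, Finset.sum_mul_sum]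
      refine sum_congr rfl fun β _ => sum_congr rfl fun γ _ => ?_
      rw [smul_eq_mul, smul_eq_mul, smul_eq_mul]
      ring
    rw [sum_congr rfl hR]
    exact (subst_collapse φ hΔ hnab he (fun β γ => D β x * D γ y)).symm
end Subst
section Dser
open Finset
variable {p : ℕ}

/-- the "monomial at 0" series -/
def dser {M : Type*} [Zero M] (m : M) : MIdx p → M := fun α => if α = 0 then m else 0

lemma fapply_dser {k M N : Type*} [Semiring k] [AddCommMonoid M] [AddCommMonoid N]
    [Module k M] [Module k N] (f : MIdx p → (M →ₗ[k] N)) (m : M) (α : MIdx p) :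
    fapply f (dser m) α = f α m := by
  unfold fapply
  rw [sum_Iic_top α _ (fun β hβ hne => ?_)]
  · rw [tsub_self]
    simp [dser]
  · have : α - β ≠ 0 := fun hc => hne ((sub_eq_zero_iff (mem_Iic.mp hβ)).mp hc)
    rw [show dser m (α - β) = 0 from if_neg this, map_zero]

lemma happly_dser_right {A E F : Type*} [CommRing A] [AddCommGroup E] [Module A E]
    [AddCommGroup F] [Module A F] (hS : MIdx p → (E →ₗ[A] F)) (z : E) (α : MIdx p) :
    happly hS (dser z) α = hS α z := by
  unfold happly
  rw [sum_Iic_top α _ (fun β hβ hne => ?_)]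
  · rw [tsub_self]
    simp [dser]
  · have : α - β ≠ 0 := fun hc => hne ((sub_eq_zero_iff (mem_Iic.mp hβ)).mp hc)
    rw [show dser z (α - β) = 0 from if_neg this, map_zero]

lemma happly_dser_left {A E F : Type*} [CommRing A] [AddCommGroup E] [Module A E]
    [AddCommGroup F] [Module A F] (x : E →ₗ[A] F) (g : MIdx p → E) (α : MIdx p) :
    happly (dser x) g α = x (g α) := by
  unfold happly
  rw [sum_Iic_bot α _ (fun β _ hne => ?_)]
  · rw [tsub_zero]
    simp [dser]
  · rw [show dser x β = 0 from if_neg hne]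
    simp

lemma smul'_dser {A M : Type*} [Semiring A] [AddCommMonoid M] [Module A M]
    (a : A) (m : M) : smul' (dser a) (dser m) = (dser (a • m) : MIdx p → M) := by
  funext α
  unfold smul'
  rw [sum_Iic_bot α _ (fun β _ hne => ?_)]
  · rw [tsub_zero]
    unfold dser
    by_cases h0 : α = 0 <;> simp [h0]
  · rw [show dser a β = 0 from if_neg hne, zero_smul]

end Dser

section PsiFacts
open Finset
variable {p : ℕ} {k A M : Type*} [CommRing k] [CommRing A] [Algebra k A]
  [AddCommGroup M] [Module k M] [Module A M] [IsScalarTower k A M]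
  {Ψ : HSSystem k A M} {Δ : Set (MIdx p)}

lemma psi_pw_leib (hΨ : IsPreHSMod k A M Ψ) (hΔ : IsCoideal Δ)
    {D : MIdx p → Module.End k A} (hD : IsHS k A Δ D) {γ : MIdx p} (hγ : γ ∈ Δ)
    (a : A) (m : M) :
    Ψ p Δ D γ (a • m) = ∑ u ∈ Iic γ, (D u a) • (Ψ p Δ D (γ - u) m) := by
  have hleib := (hΨ p Δ hΔ D hD).2.2.2.2.1 (dser a) (dser m) γ hγ
  have e1 : fapply (Ψ p Δ D) (smul' (dser a) (dser m)) γ = Ψ p Δ D γ (a • m) := by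
    rw [smul'_dser, fapply_dser]
  have e2 : smul' (fapply D (dser a)) (fapply (Ψ p Δ D) (dser m)) γ
      = ∑ u ∈ Iic γ, (D u a) • (Ψ p Δ D (γ - u) m) := by
    unfold smul'
    refine sum_congr rfl fun u _ => ?_
    rw [fapply_dser, fapply_dser]
  rw [← e1, hleib, e2]

lemma psi_one (hΨ : IsPreHSMod k A M Ψ) (hΔ : IsCoideal Δ) :
    ∀ α ∈ Δ, Ψ p Δ (one' : MIdx p → Module.End k A) α = one' α := by
  have hHS : IsHS k A Δ (one' : MIdx p → Module.End k A) := one'_isHS hΔ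
  have hfun : sconv (one' : MIdx p → Module.End k A) one' = one' :=
    funext fun α => one'_sconv one' α
  have hm := (hΨ p Δ hΔ one' hHS).2.2.1 one' hHS
  rw [hfun] at hm
  obtain ⟨v, hv1, hv2⟩ := (hΨ p Δ hΔ one' hHS).2.2.2.1
  intro α hα
  calc Ψ p Δ (one' : MIdx p → Module.End k A) α
      = ∑ β ∈ Iic α, (one' : MIdx p → Module.End k M) β * Ψ p Δ one' (α - β) :=
        (one'_sconv _ α).symm
    _ = ∑ β ∈ Iic α, sconv v (Ψ p Δ one') β * Ψ p Δ one' (α - β) :=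
        Finset.sum_congr rfl fun β hβ =>
          by rw [← hv2 β (coideal_mem hΔ hα (mem_Iic.mp hβ))]
    _ = sconv (sconv v (Ψ p Δ one')) (Ψ p Δ one') α := rfl
    _ = sconv v (sconv (Ψ p Δ one') (Ψ p Δ one')) α := sconv_assoc _ _ _ α
    _ = ∑ β ∈ Iic α, v β * sconv (Ψ p Δ one') (Ψ p Δ one') (α - β) := rfl
    _ = ∑ β ∈ Iic α, v β * Ψ p Δ one' (α - β) :=
        Finset.sum_congr rfl fun β _ =>
          by rw [← hm (α - β) (coideal_sub_mem hΔ hα β)]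
    _ = sconv v (Ψ p Δ one') α := rfl
    _ = one' α := hv2 α hα

lemma psi_inv_pair (hΨ : IsPreHSMod k A M Ψ) (hΔ : IsCoideal Δ)
    {D Ds : MIdx p → Module.End k A} (hD : IsHS k A Δ D) (hDs : IsHS k A Δ Ds)
    (hinv : ∀ α ∈ Δ, sconv D Ds α = (one' : MIdx p → Module.End k A) α) :
    ∀ α ∈ Δ, sconv (Ψ p Δ D) (Ψ p Δ Ds) α = one' α := by
  have hm := (hΨ p Δ hΔ D hD).2.2.1 Ds hDs
  have hcls := (hΨ p Δ hΔ (sconv D Ds) (isHS_sconv hΔ hD hDs)).2.1 one' (one'_isHS hΔ) hinv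
  intro α hα
  rw [← hm α hα, hcls α hα, psi_one hΨ hΔ α hα]

lemma psi_inv_applied (hΨ : IsPreHSMod k A M Ψ) (hΔ : IsCoideal Δ)
    {D Ds : MIdx p → Module.End k A} (hD : IsHS k A Δ D) (hDs : IsHS k A Δ Ds)
    (hinv : ∀ α ∈ Δ, sconv D Ds α = (one' : MIdx p → Module.End k A) α) :
    ∀ α ∈ Δ, ∀ m : M, ∑ β ∈ Iic α, Ψ p Δ D β (Ψ p Δ Ds (α - β) m)
      = if α = 0 then m else 0 := by
  intro α hα m
  rw [← sconv_apply, psi_inv_pair hΨ hΔ hD hDs hinv α hα, one'_apply]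

end PsiFacts
section Machinery
open Finset
variable {p : ℕ} {k A E F : Type*} [CommRing k] [CommRing A] [Algebra k A]
  [AddCommGroup E] [Module k E] [Module A E] [IsScalarTower k A E]
  [AddCommGroup F] [Module k F] [Module A F] [IsScalarTower k A F]
  {Δ : Set (MIdx p)}

lemma fapply_eq {M N : Type*} [AddCommMonoid M] [AddCommMonoid N] [Module k M] [Module k N]
    (f : MIdx p → (M →ₗ[k] N)) (m : MIdx p → M) (α : MIdx p) :
    fapply f m α = ∑ β ∈ Iic α, f β (m (α - β)) := rfl

lemma happly_eq (h : MIdx p → (E →ₗ[A] F)) (eS : MIdx p → E) (α : MIdx p) :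
    happly h eS α = ∑ β ∈ Iic α, h β (eS (α - β)) := rfl

lemma E1_to_E2 (hΔ : IsCoideal Δ) (P : MIdx p → Module.End k F)
    (Qs : MIdx p → Module.End k E) (Θ : MIdx p → Module.End k (E →ₗ[A] F))
    (hchar : ∀ (hS : MIdx p → (E →ₗ[A] F)) (eS : MIdx p → E), ∀ α ∈ Δ,
      happly (fapply Θ hS) eS α = fapply P (happly hS (fapply Qs eS)) α) :
    ∀ α ∈ Δ, ∀ (x : E →ₗ[A] F) (z : E),
      Θ α x z = ∑ β ∈ Iic α, P β (x (Qs (α - β) z)) := by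
  intro α hα x z
  have h := hchar (dser x) (dser z) α hα
  have e1 : happly (fapply Θ (dser x)) (dser z) α = (Θ α x) z := by
    rw [happly_dser_right, fapply_dser]
  have e2 : fapply P (happly (dser x) (fapply Qs (dser z))) α
      = ∑ β ∈ Iic α, P β (x (Qs (α - β) z)) := by
    rw [fapply_eq]
    refine sum_congr rfl fun β _ => ?_
    congr 1
    rw [happly_dser_left]
    congr 1
    rw [fapply_dser]
  rw [← e1, h, e2]

lemma E2_to_E1 (hΔ : IsCoideal Δ) (P : MIdx p → Module.End k F)
    (Qs : MIdx p → Module.End k E) (Θ : MIdx p → Module.End k (E →ₗ[A] F))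
    (hE2 : ∀ α ∈ Δ, ∀ (x : E →ₗ[A] F) (z : E),
      Θ α x z = ∑ u ∈ Iic α, P u (x (Qs (α - u) z))) :
    ∀ (hS : MIdx p → (E →ₗ[A] F)) (eS : MIdx p → E), ∀ α ∈ Δ,
      happly (fapply Θ hS) eS α = fapply P (happly hS (fapply Qs eS)) α := by
  intro hS eS α hα
  have lhs1 : happly (fapply Θ hS) eS α
      = ∑ β ∈ Iic α, ∑ γ ∈ Iic β, ∑ u ∈ Iic γ,
          P u ((hS (β - γ)) (Qs (γ - u) (eS (α - β)))) := by
    rw [happly_eq]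
    refine sum_congr rfl fun β hβ => ?_
    rw [fapply_eq, LinearMap.sum_apply]
    refine sum_congr rfl fun γ hγ => ?_
    exact hE2 γ (coideal_mem hΔ hα (le_trans (mem_Iic.mp hγ) (mem_Iic.mp hβ)))
      (hS (β - γ)) (eS (α - β))
  have rhs1 : fapply P (happly hS (fapply Qs eS)) α
      = ∑ a ∈ Iic α, ∑ b ∈ Iic (α - a), ∑ c ∈ Iic (α - a - b),
          P a ((hS b) (Qs c (eS (α - a - b - c)))) := by
    rw [fapply_eq]
    refine sum_congr rfl fun a _ => ?_
    rw [happly_eq, map_sum]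
    refine sum_congr rfl fun b _ => ?_
    rw [fapply_eq, map_sum, map_sum]
  rw [lhs1, rhs1, quad4 α (fun a b c d => P a ((hS c) (Qs b (eS d))))]
  exact canon_swap α (fun a b c d => P a ((hS b) (Qs c (eS d))))

lemma E2_to_E3 (hΔ : IsCoideal Δ) (P : MIdx p → Module.End k F)
    (Q Qs : MIdx p → Module.End k E) (Θ : MIdx p → Module.End k (E →ₗ[A] F))
    (hE2 : ∀ α ∈ Δ, ∀ (x : E →ₗ[A] F) (z : E),
      Θ α x z = ∑ u ∈ Iic α, P u (x (Qs (α - u) z)))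
    (hQinv : ∀ σ ∈ Δ, ∀ z : E, ∑ v ∈ Iic σ, Qs v (Q (σ - v) z) = if σ = 0 then z else 0) :
    ∀ σ ∈ Δ, ∀ (x : E →ₗ[A] F) (z : E),
      ∑ a ∈ Iic σ, (Θ a x) (Q (σ - a) z) = P σ (x z) := by
  intro σ hσ x z
  have e1 : ∑ a ∈ Iic σ, (Θ a x) (Q (σ - a) z)
      = ∑ a ∈ Iic σ, ∑ u ∈ Iic a, P u (x (Qs (a - u) (Q (σ - a) z))) :=
    sum_congr rfl fun a ha => hE2 a (coideal_mem hΔ hσ (mem_Iic.mp ha)) x _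
  rw [e1, tri1 σ (fun a b c => P a (x (Qs b (Q c z))))]
  have e2 : ∀ a ∈ Iic σ, ∑ b ∈ Iic (σ - a), P a (x (Qs b (Q (σ - a - b) z)))
      = P a (x (if σ - a = 0 then z else 0)) := by
    intro a _
    rw [← map_sum, ← map_sum]
    congr 2
    exact hQinv (σ - a) (coideal_sub_mem hΔ hσ a) z
  rw [sum_congr rfl e2]
  rw [sum_Iic_top σ _ (fun a ha hne => ?_)]
  · rw [tsub_self, if_pos rfl]
  · have : σ - a ≠ 0 := fun hc => hne ((sub_eq_zero_iff (mem_Iic.mp ha)).mp hc)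
    rw [if_neg this, map_zero, map_zero]

lemma star_det (hΔ : IsCoideal Δ) {Q Qs : MIdx p → Module.End k E}
    {T : MIdx p → (E →ₗ[A] F)} {R : MIdx p → E → F}
    (hQQs : ∀ σ ∈ Δ, ∀ z : E, ∑ c ∈ Iic σ, Q c (Qs (σ - c) z) = if σ = 0 then z else 0)
    (hT : ∀ ε ∈ Δ, ∀ z : E, ∑ δ ∈ Iic ε, T δ (Q (ε - δ) z) = R ε z) :
    ∀ δ ∈ Δ, ∀ z : E, T δ z = ∑ σ ∈ Iic δ, R σ (Qs (δ - σ) z) := by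
  intro δ hδ z
  have e1 : ∑ σ ∈ Iic δ, R σ (Qs (δ - σ) z)
      = ∑ σ ∈ Iic δ, ∑ a ∈ Iic σ, T a (Q (σ - a) (Qs (δ - σ) z)) :=
    sum_congr rfl fun σ hσ => (hT σ (coideal_mem hΔ hδ (mem_Iic.mp hσ)) _).symm
  rw [e1, tri1 δ (fun a b c => T a (Q b (Qs c z)))]
  have e2 : ∀ a ∈ Iic δ, ∑ b ∈ Iic (δ - a), T a (Q b (Qs (δ - a - b) z))
      = T a (if δ - a = 0 then z else 0) := by
    intro a _
    rw [← map_sum]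
    congr 1
    exact hQQs (δ - a) (coideal_sub_mem hΔ hδ a) z
  rw [sum_congr rfl e2]
  rw [sum_Iic_top δ _ (fun a ha hne => ?_)]
  · rw [tsub_self, if_pos rfl]
  · have : δ - a ≠ 0 := fun hc => hne ((sub_eq_zero_iff (mem_Iic.mp ha)).mp hc)
    rw [if_neg this, map_zero]

lemma theta_inv (hΔ : IsCoideal Δ) {P PDs : MIdx p → Module.End k F}
    {QDs : MIdx p → Module.End k E}
    {Θa Θb : MIdx p → Module.End k (E →ₗ[A] F)}
    (hE2a : ∀ α ∈ Δ, ∀ (x : E →ₗ[A] F) (z : E),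
      Θa α x z = ∑ u ∈ Iic α, P u (x (QDs (α - u) z)))
    (hE3b : ∀ σ ∈ Δ, ∀ (x : E →ₗ[A] F) (z : E),
      ∑ b ∈ Iic σ, (Θb b x) (QDs (σ - b) z) = PDs σ (x z))
    (hPinv : ∀ δ ∈ Δ, ∀ y : F, ∑ u ∈ Iic δ, P u (PDs (δ - u) y) = if δ = 0 then y else 0) :
    ∀ δ ∈ Δ, sconv Θa Θb δ = (one' : MIdx p → Module.End k (E →ₗ[A] F)) δ := by
  intro δ hδ
  apply LinearMap.ext
  intro x
  apply LinearMap.ext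
  intro z
  have e0 : (sconv Θa Θb δ x) z = ∑ a ∈ Iic δ, (Θa a (Θb (δ - a) x)) z := by
    have : sconv Θa Θb δ x = ∑ a ∈ Iic δ, Θa a (Θb (δ - a) x) := by
      unfold sconv
      rw [LinearMap.sum_apply]
      exact sum_congr rfl fun a _ => rfl
    rw [this, LinearMap.sum_apply]
  have e1 : ∑ a ∈ Iic δ, (Θa a (Θb (δ - a) x)) z
      = ∑ a ∈ Iic δ, ∑ u ∈ Iic a, P u ((Θb (δ - a) x) (QDs (a - u) z)) :=
    sum_congr rfl fun a ha => hE2a a (coideal_mem hΔ hδ (mem_Iic.mp ha)) _ z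
  have e2 : ∑ a ∈ Iic δ, ∑ u ∈ Iic a, P u ((Θb (δ - a) x) (QDs (a - u) z))
      = ∑ u ∈ Iic δ, ∑ b ∈ Iic (δ - u), P u ((Θb (δ - u - b) x) (QDs b z)) :=
    tri1 δ (fun a b c => P a ((Θb c x) (QDs b z)))
  have e3 : ∀ u ∈ Iic δ, ∑ b ∈ Iic (δ - u), P u ((Θb (δ - u - b) x) (QDs b z))
      = P u (PDs (δ - u) (x z)) := by
    intro u hu
    rw [L_refl (δ - u) (fun b c => P u ((Θb c x) (QDs b z)))]
    rw [← map_sum]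
    congr 1
    exact hE3b (δ - u) (coideal_sub_mem hΔ hδ u) x z
  rw [e0, e1, e2, sum_congr rfl e3, hPinv δ hδ (x z)]
  rw [show ((one' : MIdx p → Module.End k (E →ₗ[A] F)) δ) x
      = if δ = 0 then x else 0 from one'_apply δ x]
  by_cases h0 : δ = 0
  · rw [if_pos h0, if_pos h0]
  · rw [if_neg h0, if_neg h0, LinearMap.zero_apply]

end Machinery
section Main
open Finset
variable {p : ℕ} {k A E F : Type*} [CommRing k] [CommRing A] [Algebra k A]
  [AddCommGroup E] [Module k E] [Module A E] [IsScalarTower k A E]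
  [AddCommGroup F] [Module k F] [Module A F] [IsScalarTower k A F]
  {Ψ₁ : HSSystem k A E} {Ψ₂ : HSSystem k A F}
  {Δ : Set (MIdx p)}

lemma smul'_apply_point (a : MIdx p → A) (h : MIdx p → (E →ₗ[A] F)) (w : MIdx p) (z : E) :
    (smul' a h w) z = smul' a (fun t => (h t) z) w := by
  unfold smul'
  rw [LinearMap.sum_apply]
  exact sum_congr rfl fun v _ => rfl

/-- `A`-linearity of the conjugation formula -/
lemma theta_smul (hΨ₁ : IsPreHSMod k A E Ψ₁) (hΨ₂ : IsPreHSMod k A F Ψ₂)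
    (hΔ : IsCoideal Δ) {D Ds : MIdx p → Module.End k A}
    (hD : IsHS k A Δ D) (hDs : IsHS k A Δ Ds)
    (hinv1 : ∀ α ∈ Δ, sconv D Ds α = (one' : MIdx p → Module.End k A) α) :
    ∀ α ∈ Δ, ∀ (x : E →ₗ[A] F) (a : A) (z : E),
      ∑ β ∈ Iic α, Ψ₂ p Δ D β (x (Ψ₁ p Δ Ds (α - β) (a • z)))
        = a • ∑ β ∈ Iic α, Ψ₂ p Δ D β (x (Ψ₁ p Δ Ds (α - β) z)) := by
  intro α hα x a z
  set m : MIdx p → F := fun w => x (Ψ₁ p Δ Ds w z) with hm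
  set a' : MIdx p → A := fun u => Ds u a with ha'
  have e1 : ∀ β ∈ Iic α, Ψ₂ p Δ D β (x (Ψ₁ p Δ Ds (α - β) (a • z)))
      = Ψ₂ p Δ D β (smul' a' m (α - β)) := by
    intro β _
    congr 1
    rw [psi_pw_leib hΨ₁ hΔ hDs (coideal_sub_mem hΔ hα β) a z, map_sum]
    unfold smul'
    refine sum_congr rfl fun u _ => ?_
    rw [map_smul]
  rw [sum_congr rfl e1]
  have e2 : ∑ β ∈ Iic α, Ψ₂ p Δ D β (smul' a' m (α - β))
      = smul' (fapply D a') (fapply (Ψ₂ p Δ D) m) α :=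
    (hΨ₂ p Δ hΔ D hD).2.2.2.2.1 a' m α hα
  rw [e2]
  unfold smul'
  have e3 : ∀ c ∈ Iic α, fapply D a' c • fapply (Ψ₂ p Δ D) m (α - c)
      = (if c = 0 then a else 0) • fapply (Ψ₂ p Δ D) m (α - c) := by
    intro c hc
    congr 1
    have : fapply D a' c = sconv D Ds c a := by
      rw [fapply_eq, sconv_apply]
    rw [this, hinv1 c (coideal_mem hΔ hα (mem_Iic.mp hc)), one'_apply]
  rw [sum_congr rfl e3]
  rw [sum_Iic_bot α _ (fun c _ hne => by rw [if_neg hne, zero_smul])]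
  rw [if_pos rfl, tsub_zero]
  rfl

/-- the conjugation operator -/
noncomputable def mkTheta (Δ : Set (MIdx p)) (P : MIdx p → Module.End k F)
    (Qs : MIdx p → Module.End k E)
    (hsm : ∀ α ∈ Δ, ∀ (x : E →ₗ[A] F) (a : A) (z : E),
      ∑ β ∈ Iic α, P β (x (Qs (α - β) (a • z)))
        = a • ∑ β ∈ Iic α, P β (x (Qs (α - β) z))) :
    MIdx p → Module.End k (E →ₗ[A] F) := fun α =>
  if hα : α ∈ Δ then
    { toFun := fun x =>
        { toFun := fun z => ∑ β ∈ Iic α, P β (x (Qs (α - β) z))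
          map_add' := fun z1 z2 => by
            simp only [map_add, Finset.sum_add_distrib]
          map_smul' := fun a z => by
            simpa using hsm α hα x a z }
      map_add' := fun x1 x2 => by
        apply LinearMap.ext
        intro z
        simp [Finset.sum_add_distrib]
      map_smul' := fun c x => by
        apply LinearMap.ext
        intro z
        simp [Finset.smul_sum] }
  else 0

lemma mkTheta_E2 (Δ : Set (MIdx p)) (P : MIdx p → Module.End k F)
    (Qs : MIdx p → Module.End k E) (hsm) :
    ∀ α ∈ Δ, ∀ (x : E →ₗ[A] F) (z : E),
      mkTheta Δ P Qs hsm α x z = ∑ β ∈ Iic α, P β (x (Qs (α - β) z)) := by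
  intro α hα x z
  unfold mkTheta
  rw [dif_pos hα]
  rfl

end Main
section Main2
open Finset
variable {p : ℕ} {k A E F : Type*} [CommRing k] [CommRing A] [Algebra k A]
  [AddCommGroup E] [Module k E] [Module A E] [IsScalarTower k A E]
  [AddCommGroup F] [Module k F] [Module A F] [IsScalarTower k A F]
  {Δ : Set (MIdx p)}

lemma sub_right_comm' (a b c : MIdx p) : a - b - c = a - c - b := by
  rw [tsub_tsub, add_comm, ← tsub_tsub]

/-- E3 for a convolution of two conjugation operators -/
lemma conv_E3 (hΔ : IsCoideal Δ) {P PE PS : MIdx p → Module.End k F}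
    {Q QE QS : MIdx p → Module.End k E}
    {ΘD ΘE : MIdx p → Module.End k (E →ₗ[A] F)}
    (hm1 : ∀ γ ∈ Δ, QS γ = sconv Q QE γ)
    (hm2 : ∀ γ ∈ Δ, PS γ = sconv P PE γ)
    (hE3D : ∀ σ ∈ Δ, ∀ (x : E →ₗ[A] F) (z : E),
      ∑ a ∈ Iic σ, (ΘD a x) (Q (σ - a) z) = P σ (x z))
    (hE3E : ∀ σ ∈ Δ, ∀ (x : E →ₗ[A] F) (z : E),
      ∑ a ∈ Iic σ, (ΘE a x) (QE (σ - a) z) = PE σ (x z)) :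
    ∀ σ ∈ Δ, ∀ (x : E →ₗ[A] F) (z : E),
      ∑ α ∈ Iic σ, ((sconv ΘD ΘE) α x) (QS (σ - α) z) = PS σ (x z) := by
  intro σ hσ x z
  have lhs1 : ∑ α ∈ Iic σ, ((sconv ΘD ΘE) α x) (QS (σ - α) z)
      = ∑ α ∈ Iic σ, ∑ a ∈ Iic α, ∑ c ∈ Iic (σ - α),
          (ΘD a (ΘE (α - a) x)) (Q c (QE (σ - α - c) z)) := by
    refine sum_congr rfl fun α hα => ?_
    have h1 : (sconv ΘD ΘE) α x = ∑ a ∈ Iic α, ΘD a (ΘE (α - a) x) := by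
      unfold sconv
      rw [LinearMap.sum_apply]
      exact sum_congr rfl fun _ _ => rfl
    rw [h1, LinearMap.sum_apply]
    refine sum_congr rfl fun a _ => ?_
    rw [hm1 (σ - α) (coideal_sub_mem hΔ hσ α), sconv_apply, map_sum]
  have rhs1 : PS σ (x z)
      = ∑ u ∈ Iic σ, ∑ b ∈ Iic (σ - u), ∑ a ∈ Iic u,
          (ΘD a (ΘE b x)) (Q (u - a) (QE (σ - u - b) z)) := by
    rw [hm2 σ hσ, sconv_apply]
    refine sum_congr rfl fun u hu => ?_
    rw [← hE3E (σ - u) (coideal_sub_mem hΔ hσ u) x z, map_sum]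
    refine sum_congr rfl fun b _ => ?_
    exact (hE3D u (coideal_mem hΔ hσ (mem_Iic.mp hu)) (ΘE b x) _).symm
  rw [lhs1, rhs1]
  rw [quad1 σ (fun a b c d => (ΘD a (ΘE b x)) (Q c (QE d z)))]
  rw [quad2 σ (fun a b c d => (ΘD a (ΘE c x)) (Q b (QE d z)))]
  exact (canon_swap σ (fun a b c d => (ΘD a (ΘE b x)) (Q c (QE d z)))).symm

/-- the star-form of the Leibniz rule, left-hand side -/
lemma leib_starX (hΔ : IsCoideal Δ) {P : MIdx p → Module.End k F}
    {Q : MIdx p → Module.End k E} {Θ : MIdx p → Module.End k (E →ₗ[A] F)}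
    {D : MIdx p → Module.End k A}
    (hE3 : ∀ σ ∈ Δ, ∀ (x : E →ₗ[A] F) (z : E),
      ∑ a ∈ Iic σ, (Θ a x) (Q (σ - a) z) = P σ (x z))
    (hPleib : ∀ (a' : MIdx p → A) (m' : MIdx p → F), ∀ α ∈ Δ,
      fapply P (smul' a' m') α = smul' (fapply D a') (fapply P m') α)
    (a : MIdx p → A) (h : MIdx p → (E →ₗ[A] F)) :
    ∀ ε ∈ Δ, ∀ z : E,
      ∑ δ ∈ Iic ε, (fapply Θ (smul' a h) δ) (Q (ε - δ) z)
        = smul' (fapply D a) (fapply P (fun t => (h t) z)) ε := by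
  intro ε hε z
  have step0 : ∑ δ ∈ Iic ε, (fapply Θ (smul' a h) δ) (Q (ε - δ) z)
      = ∑ δ ∈ Iic ε, ∑ u ∈ Iic δ, (Θ u (smul' a h (δ - u))) (Q (ε - δ) z) := by
    refine sum_congr rfl fun δ _ => ?_
    rw [fapply_eq Θ (smul' a h) δ, LinearMap.sum_apply]
  rw [step0, tri1 ε (fun u w c => (Θ u (smul' a h w)) (Q c z)),
    L_swap ε (fun u w => (Θ u (smul' a h w)) (Q (ε - u - w) z))]
  have step3 : ∀ w ∈ Iic ε, ∑ u ∈ Iic (ε - w), (Θ u (smul' a h w)) (Q (ε - u - w) z)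
      = P (ε - w) (smul' a (fun t => (h t) z) w) := by
    intro w _
    have : ∀ u ∈ Iic (ε - w), (Θ u (smul' a h w)) (Q (ε - u - w) z)
        = (Θ u (smul' a h w)) (Q (ε - w - u) z) := by
      intro u _
      rw [sub_right_comm']
    rw [sum_congr rfl this, hE3 (ε - w) (coideal_sub_mem hΔ hε w) (smul' a h w) z,
      smul'_apply_point]
  rw [sum_congr rfl step3, L_refl ε (fun w c => P c (smul' a (fun t => (h t) z) w))]
  exact hPleib a (fun t => (h t) z) ε hε

/-- the star-form of the Leibniz rule, right-hand side -/
lemma leib_starY (hΔ : IsCoideal Δ) {P : MIdx p → Module.End k F}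
    {Q : MIdx p → Module.End k E} {Θ : MIdx p → Module.End k (E →ₗ[A] F)}
    {D : MIdx p → Module.End k A}
    (hE3 : ∀ σ ∈ Δ, ∀ (x : E →ₗ[A] F) (z : E),
      ∑ a ∈ Iic σ, (Θ a x) (Q (σ - a) z) = P σ (x z))
    (a : MIdx p → A) (h : MIdx p → (E →ₗ[A] F)) :
    ∀ ε ∈ Δ, ∀ z : E,
      ∑ δ ∈ Iic ε, (smul' (fapply D a) (fapply Θ h) δ) (Q (ε - δ) z)
        = smul' (fapply D a) (fapply P (fun t => (h t) z)) ε := by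
  intro ε hε z
  have step0 : ∑ δ ∈ Iic ε, (smul' (fapply D a) (fapply Θ h) δ) (Q (ε - δ) z)
      = ∑ δ ∈ Iic ε, ∑ c ∈ Iic δ, ∑ u ∈ Iic (δ - c),
          fapply D a c • (Θ u (h (δ - c - u))) (Q (ε - δ) z) := by
    refine sum_congr rfl fun δ _ => ?_
    unfold smul'
    rw [LinearMap.sum_apply]
    refine sum_congr rfl fun c _ => ?_
    rw [LinearMap.smul_apply, fapply_eq Θ h (δ - c), LinearMap.sum_apply, Finset.smul_sum]
  rw [step0]
  have step1 : ∑ δ ∈ Iic ε, ∑ c ∈ Iic δ, ∑ u ∈ Iic (δ - c),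
      fapply D a c • (Θ u (h (δ - c - u))) (Q (ε - δ) z)
      = ∑ δ ∈ Iic ε, ∑ c ∈ Iic δ,
          (fun c' ρ => ∑ u ∈ Iic ρ, fapply D a c' • (Θ u (h (ρ - u))) (Q (ε - c' - ρ) z))
            c (δ - c) := by
    refine sum_congr rfl fun δ _ => sum_congr rfl fun c hc => ?_
    dsimp only
    rw [sub_sub_cancel' (mem_Iic.mp hc)]
  rw [step1, L_nest ε (fun c' ρ => ∑ u ∈ Iic ρ,
    fapply D a c' • (Θ u (h (ρ - u))) (Q (ε - c' - ρ) z))]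
  have step2 : ∀ c ∈ Iic ε, ∑ ρ ∈ Iic (ε - c), ∑ u ∈ Iic ρ,
      fapply D a c • (Θ u (h (ρ - u))) (Q (ε - c - ρ) z)
      = fapply D a c • fapply P (fun t => (h t) z) (ε - c) := by
    intro c _
    rw [tri1 (ε - c) (fun u w d => fapply D a c • (Θ u (h w)) (Q d z)),
      L_swap (ε - c) (fun u w => fapply D a c • (Θ u (h w)) (Q (ε - c - u - w) z))]
    have e1 : ∀ w ∈ Iic (ε - c), ∑ u ∈ Iic (ε - c - w),
        fapply D a c • (Θ u (h w)) (Q (ε - c - u - w) z)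
        = fapply D a c • P (ε - c - w) ((h w) z) := by
      intro w _
      rw [← Finset.smul_sum]
      congr 1
      have : ∀ u ∈ Iic (ε - c - w), (Θ u (h w)) (Q (ε - c - u - w) z)
          = (Θ u (h w)) (Q (ε - c - w - u) z) := by
        intro u _
        rw [sub_right_comm' (ε - c)]
      rw [sum_congr rfl this]
      exact hE3 (ε - c - w) (coideal_sub_mem hΔ (coideal_sub_mem hΔ hε c) w) (h w) z
    rw [sum_congr rfl e1, ← Finset.smul_sum,
      L_refl (ε - c) (fun w d => P d ((h w) z))]
    rfl
  rw [sum_congr rfl step2]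
  rfl

end Main2
section Main3
open Finset
variable {k A E F : Type*} [CommRing k] [CommRing A] [Algebra k A]
  [AddCommGroup E] [Module k E] [Module A E] [IsScalarTower k A E]
  [AddCommGroup F] [Module k F] [Module A F] [IsScalarTower k A F]
  {Ψ₁ : HSSystem k A E} {Ψ₂ : HSSystem k A F}

lemma theta_subst (hΨ₁ : IsPreHSMod k A E Ψ₁) (hΨ₂ : IsPreHSMod k A F Ψ₂)
    (Θsys : HSSystem k A (E →ₗ[A] F))
    (Hchar : ∀ (p : ℕ) (Δ : Set (MIdx p)), IsCoideal Δ →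
      ∀ D Ds : MIdx p → Module.End k A, IsHS k A Δ D → IsHS k A Δ Ds →
        (∀ α ∈ Δ, sconv D Ds α = (one' : MIdx p → Module.End k A) α) →
        (∀ α ∈ Δ, sconv Ds D α = (one' : MIdx p → Module.End k A) α) →
        ∀ (hS : MIdx p → (E →ₗ[A] F)) (eS : MIdx p → E), ∀ α ∈ Δ,
          happly (fapply (Θsys p Δ D) hS) eS α
            = fapply (Ψ₂ p Δ D) (happly hS (fapply (Ψ₁ p Δ Ds) eS)) α)
    {p : ℕ} {Δ : Set (MIdx p)} (hΔ : IsCoideal Δ)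
    {D : MIdx p → Module.End k A} (hD : IsHS k A Δ D)
    {q : ℕ} {nab : Set (MIdx q)} (hnab : IsCoideal nab) (φ : SubstMap A p q Δ nab)
    (hsub1 : ∀ e ∈ nab, ∀ z : E, Ψ₁ q nab (φ.bulletEnd D) e z
      = ∑ α ∈ Iic ((fun _ => wt e) : MIdx p), φ.C α e • Ψ₁ p Δ D α z)
    (hsub2 : ∀ e ∈ nab, ∀ y : F, Ψ₂ q nab (φ.bulletEnd D) e y
      = ∑ α ∈ Iic ((fun _ => wt e) : MIdx p), φ.C α e • Ψ₂ p Δ D α y) :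
    ∀ e ∈ nab, ∀ x : E →ₗ[A] F, Θsys q nab (φ.bulletEnd D) e x
      = ∑ α ∈ Iic ((fun _ => wt e) : MIdx p), φ.C α e • Θsys p Δ D α x := by
  have hDs : IsHS k A Δ (hsInv D) := isHS_hsInv hΔ hD
  have hinv1 : ∀ α ∈ Δ, sconv D (hsInv D) α = (one' : MIdx p → Module.End k A) α :=
    fun α _ => sconv_hsInv hD.1 α
  have hinv2 : ∀ α ∈ Δ, sconv (hsInv D) D α = (one' : MIdx p → Module.End k A) α :=
    fun α _ => hsInv_sconv hD.1 α
  have hE2D := E1_to_E2 hΔ (Ψ₂ p Δ D) (Ψ₁ p Δ (hsInv D)) (Θsys p Δ D)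
    (Hchar p Δ hΔ D (hsInv D) hD hDs hinv1 hinv2)
  have hE3D := E2_to_E3 hΔ (Ψ₂ p Δ D) (Ψ₁ p Δ D) (Ψ₁ p Δ (hsInv D)) (Θsys p Δ D) hE2D
    (psi_inv_applied hΨ₁ hΔ hDs hD hinv2)
  set DE := φ.bulletEnd D with hDEdef
  have hDEhs : IsHS k A nab DE := isHS_bulletEnd φ hΔ hnab hD
  have hDEs : IsHS k A nab (hsInv DE) := isHS_hsInv hnab hDEhs
  have hinv1' : ∀ e ∈ nab, sconv DE (hsInv DE) e = (one' : MIdx q → Module.End k A) e :=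
    fun e _ => sconv_hsInv hDEhs.1 e
  have hinv2' : ∀ e ∈ nab, sconv (hsInv DE) DE e = (one' : MIdx q → Module.End k A) e :=
    fun e _ => hsInv_sconv hDEhs.1 e
  have hE2DE := E1_to_E2 hnab (Ψ₂ q nab DE) (Ψ₁ q nab (hsInv DE)) (Θsys q nab DE)
    (Hchar q nab hnab DE (hsInv DE) hDEhs hDEs hinv1' hinv2')
  have hE3DE := E2_to_E3 hnab (Ψ₂ q nab DE) (Ψ₁ q nab DE) (Ψ₁ q nab (hsInv DE))
    (Θsys q nab DE) hE2DE (psi_inv_applied hΨ₁ hnab hDEs hDEhs hinv2')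
  intro e he x
  set Ξ : MIdx q → (E →ₗ[A] F) :=
    fun u => ∑ α ∈ Iic ((fun _ => wt u) : MIdx p), φ.C α u • Θsys p Δ D α x with hXi
  have hXiE3 : ∀ e' ∈ nab, ∀ z : E,
      ∑ u ∈ Iic e', (Ξ u) (Ψ₁ q nab DE (e' - u) z) = Ψ₂ q nab DE e' (x z) := by
    intro e' he' z
    have lhs1 : ∑ u ∈ Iic e', (Ξ u) (Ψ₁ q nab DE (e' - u) z)
        = ∑ u ∈ Iic e', ∑ β ∈ Iic ((fun _ => wt u) : MIdx p),
            ∑ γ ∈ Iic ((fun _ => wt (e' - u)) : MIdx p),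
              (φ.C β u * φ.C γ (e' - u)) • ((Θsys p Δ D β x) (Ψ₁ p Δ D γ z)) := by
      refine sum_congr rfl fun u _ => ?_
      rw [hXi]
      dsimp only
      rw [LinearMap.sum_apply, hsub1 (e' - u) (coideal_sub_mem hnab he' u) z]
      refine sum_congr rfl fun β _ => ?_
      rw [LinearMap.smul_apply, map_sum, Finset.smul_sum]
      refine sum_congr rfl fun γ _ => ?_
      rw [map_smul, smul_smul]
    rw [lhs1, subst_collapse φ hΔ hnab he'
      (fun β γ => (Θsys p Δ D β x) (Ψ₁ p Δ D γ z)), hsub2 e' he' (x z)]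
    have rhs1 : ∑ δ ∈ Iic ((fun _ => wt e') : MIdx p), φ.C δ e' • Ψ₂ p Δ D δ (x z)
        = ∑ δ ∈ Iic ((fun _ => wt e') : MIdx p), ∑ β ∈ Iic δ,
            (fun b c => φ.C (b + c) e' • ((Θsys p Δ D b x) (Ψ₁ p Δ D c z))) β (δ - β) := by
      refine sum_congr rfl fun δ _ => ?_
      by_cases hδ : δ ∈ Δ
      · rw [← hE3D δ hδ x z, Finset.smul_sum]
        refine sum_congr rfl fun β hβ => ?_
        dsimp only
        rw [add_tsub_cancel_of_le (mem_Iic.mp hβ)]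
      · rw [φ.c_suppL δ hδ e', zero_smul]
        symm
        apply Finset.sum_eq_zero
        intro β hβ
        dsimp only
        rw [show β + (δ - β) = δ from add_tsub_cancel_of_le (mem_Iic.mp hβ),
          φ.c_suppL δ hδ e', zero_smul]
    rw [rhs1, L_nest ((fun _ => wt e') : MIdx p)
      (fun b c => φ.C (b + c) e' • ((Θsys p Δ D b x) (Ψ₁ p Δ D c z)))]
  have hdet1 := star_det (E := E) (F := F) hnab (Q := Ψ₁ q nab DE)
    (Qs := Ψ₁ q nab (hsInv DE)) (T := fun u => Θsys q nab DE u x)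
    (R := fun e' z => Ψ₂ q nab DE e' (x z))
    (psi_inv_applied hΨ₁ hnab hDEhs hDEs hinv1')
    (fun e' he' z => hE3DE e' he' x z)
  have hdet2 := star_det (E := E) (F := F) hnab (Q := Ψ₁ q nab DE)
    (Qs := Ψ₁ q nab (hsInv DE)) (T := Ξ)
    (R := fun e' z => Ψ₂ q nab DE e' (x z))
    (psi_inv_applied hΨ₁ hnab hDEhs hDEs hinv1')
    hXiE3
  exact LinearMap.ext fun z => (hdet1 e he z).trans (hdet2 e he z).symm

end Main3
section Assemble
open Finset
variable {k A E F : Type*} [CommRing k] [CommRing A] [Algebra k A]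
  [AddCommGroup E] [Module k E] [Module A E] [IsScalarTower k A E]
  [AddCommGroup F] [Module k F] [Module A F] [IsScalarTower k A F]
  {Ψ₁ : HSSystem k A E} {Ψ₂ : HSSystem k A F}

lemma pre_of_hs {M : Type*} [AddCommGroup M] [Module k M] [Module A M]
    [IsScalarTower k A M] {Ψ : HSSystem k A M} (h : IsHSMod k A M Ψ) :
    IsPreHSMod k A M Ψ := by
  intro p Δ hΔ D hD
  obtain ⟨h1, h2, h3, h4, h5, h6⟩ := h p Δ hΔ D hD
  exact ⟨h1, h2, h3, h4, h5, fun q nab hnab φ _ => h6 q nab hnab φ⟩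

lemma theta_clauses (hΨ₁ : IsPreHSMod k A E Ψ₁) (hΨ₂ : IsPreHSMod k A F Ψ₂)
    (Θsys : HSSystem k A (E →ₗ[A] F))
    (Hchar : ∀ (p : ℕ) (Δ : Set (MIdx p)), IsCoideal Δ →
      ∀ D Ds : MIdx p → Module.End k A, IsHS k A Δ D → IsHS k A Δ Ds →
        (∀ α ∈ Δ, sconv D Ds α = (one' : MIdx p → Module.End k A) α) →
        (∀ α ∈ Δ, sconv Ds D α = (one' : MIdx p → Module.End k A) α) →
        ∀ (hS : MIdx p → (E →ₗ[A] F)) (eS : MIdx p → E), ∀ α ∈ Δ,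
          happly (fapply (Θsys p Δ D) hS) eS α
            = fapply (Ψ₂ p Δ D) (happly hS (fapply (Ψ₁ p Δ Ds) eS)) α)
    (p : ℕ) (Δ : Set (MIdx p)) (hΔ : IsCoideal Δ)
    (D : MIdx p → Module.End k A) (hD : IsHS k A Δ D) :
    (Θsys p Δ D 0 = 1)
    ∧ (∀ D' : MIdx p → Module.End k A, IsHS k A Δ D' → (∀ α ∈ Δ, D α = D' α) →
        ∀ α ∈ Δ, Θsys p Δ D α = Θsys p Δ D' α)
    ∧ (∀ D₂ : MIdx p → Module.End k A, IsHS k A Δ D₂ →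
        ∀ α ∈ Δ, Θsys p Δ (sconv D D₂) α = sconv (Θsys p Δ D) (Θsys p Δ D₂) α)
    ∧ (∃ Θ' : MIdx p → Module.End k (E →ₗ[A] F),
        (∀ α ∈ Δ, sconv (Θsys p Δ D) Θ' α = (one' : MIdx p → Module.End k (E →ₗ[A] F)) α)
        ∧ (∀ α ∈ Δ, sconv Θ' (Θsys p Δ D) α = (one' : MIdx p → Module.End k (E →ₗ[A] F)) α))
    ∧ (∀ (a : MIdx p → A) (m : MIdx p → (E →ₗ[A] F)), ∀ α ∈ Δ,
        fapply (Θsys p Δ D) (smul' a m) α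
          = smul' (fapply D a) (fapply (Θsys p Δ D) m) α) := by
  -- prelude for D
  have hDs : IsHS k A Δ (hsInv D) := isHS_hsInv hΔ hD
  have hinv1 : ∀ α ∈ Δ, sconv D (hsInv D) α = (one' : MIdx p → Module.End k A) α :=
    fun α _ => sconv_hsInv hD.1 α
  have hinv2 : ∀ α ∈ Δ, sconv (hsInv D) D α = (one' : MIdx p → Module.End k A) α :=
    fun α _ => hsInv_sconv hD.1 α
  have hE2D := E1_to_E2 hΔ (Ψ₂ p Δ D) (Ψ₁ p Δ (hsInv D)) (Θsys p Δ D)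
    (Hchar p Δ hΔ D (hsInv D) hD hDs hinv1 hinv2)
  have hE3D := E2_to_E3 hΔ (Ψ₂ p Δ D) (Ψ₁ p Δ D) (Ψ₁ p Δ (hsInv D)) (Θsys p Δ D) hE2D
    (psi_inv_applied hΨ₁ hΔ hDs hD hinv2)
  refine ⟨?_, ?_, ?_, ?_, ?_⟩
  · -- Θ 0 = 1
    apply LinearMap.ext; intro x; apply LinearMap.ext; intro z
    rw [hE2D 0 (zero_mem_coideal hΔ) x z, sum_Iic_zero,
      show ((0 : MIdx p) - 0) = 0 from tsub_zero 0,
      (hΨ₂ p Δ hΔ D hD).1, (hΨ₁ p Δ hΔ (hsInv D) hDs).1]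
    simp
  · -- class dependence
    intro D' hD' hagree α hα
    have hDs' : IsHS k A Δ (hsInv D') := isHS_hsInv hΔ hD'
    have hE2D' := E1_to_E2 hΔ (Ψ₂ p Δ D') (Ψ₁ p Δ (hsInv D')) (Θsys p Δ D')
      (Hchar p Δ hΔ D' (hsInv D') hD' hDs' (fun α _ => sconv_hsInv hD'.1 α)
        (fun α _ => hsInv_sconv hD'.1 α))
    apply LinearMap.ext; intro x; apply LinearMap.ext; intro z
    rw [hE2D α hα x z, hE2D' α hα x z]
    refine sum_congr rfl fun β hβ => ?_
    rw [(hΨ₂ p Δ hΔ D hD).2.1 D' hD' hagree β (coideal_mem hΔ hα (mem_Iic.mp hβ)),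
      (hΨ₁ p Δ hΔ (hsInv D) hDs).2.1 (hsInv D') hDs' (hsInv_congr hΔ hagree)
        (α - β) (coideal_sub_mem hΔ hα β)]
  · -- multiplicativity
    intro D₂ hD₂ α hα
    have hDs₂ : IsHS k A Δ (hsInv D₂) := isHS_hsInv hΔ hD₂
    have hE2D₂ := E1_to_E2 hΔ (Ψ₂ p Δ D₂) (Ψ₁ p Δ (hsInv D₂)) (Θsys p Δ D₂)
      (Hchar p Δ hΔ D₂ (hsInv D₂) hD₂ hDs₂ (fun α _ => sconv_hsInv hD₂.1 α)
        (fun α _ => hsInv_sconv hD₂.1 α))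
    have hE3D₂ := E2_to_E3 hΔ (Ψ₂ p Δ D₂) (Ψ₁ p Δ D₂) (Ψ₁ p Δ (hsInv D₂)) (Θsys p Δ D₂)
      hE2D₂ (psi_inv_applied hΨ₁ hΔ hDs₂ hD₂ (fun α _ => hsInv_sconv hD₂.1 α))
    have hS : IsHS k A Δ (sconv D D₂) := isHS_sconv hΔ hD hD₂
    have hSs : IsHS k A Δ (hsInv (sconv D D₂)) := isHS_hsInv hΔ hS
    have hinv1S : ∀ α ∈ Δ, sconv (sconv D D₂) (hsInv (sconv D D₂)) α
        = (one' : MIdx p → Module.End k A) α := fun α _ => sconv_hsInv hS.1 α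
    have hinv2S : ∀ α ∈ Δ, sconv (hsInv (sconv D D₂)) (sconv D D₂) α
        = (one' : MIdx p → Module.End k A) α := fun α _ => hsInv_sconv hS.1 α
    have hE2S := E1_to_E2 hΔ (Ψ₂ p Δ (sconv D D₂)) (Ψ₁ p Δ (hsInv (sconv D D₂)))
      (Θsys p Δ (sconv D D₂))
      (Hchar p Δ hΔ (sconv D D₂) (hsInv (sconv D D₂)) hS hSs hinv1S hinv2S)
    have hE3S := E2_to_E3 hΔ (Ψ₂ p Δ (sconv D D₂)) (Ψ₁ p Δ (sconv D D₂))
      (Ψ₁ p Δ (hsInv (sconv D D₂))) (Θsys p Δ (sconv D D₂)) hE2S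
      (psi_inv_applied hΨ₁ hΔ hSs hS hinv2S)
    have hconv := conv_E3 hΔ (fun γ hγ => (hΨ₁ p Δ hΔ D hD).2.2.1 D₂ hD₂ γ hγ)
      (fun γ hγ => (hΨ₂ p Δ hΔ D hD).2.2.1 D₂ hD₂ γ hγ) hE3D hE3D₂
    have hQQs := psi_inv_applied hΨ₁ hΔ hS hSs hinv1S
    apply LinearMap.ext; intro x; apply LinearMap.ext; intro z
    have d1 := star_det hΔ (Q := Ψ₁ p Δ (sconv D D₂)) (Qs := Ψ₁ p Δ (hsInv (sconv D D₂)))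
      (T := fun a => Θsys p Δ (sconv D D₂) a x)
      (R := fun σ z' => Ψ₂ p Δ (sconv D D₂) σ (x z')) hQQs
      (fun σ hσ z' => hE3S σ hσ x z')
    have d2 := star_det hΔ (Q := Ψ₁ p Δ (sconv D D₂)) (Qs := Ψ₁ p Δ (hsInv (sconv D D₂)))
      (T := fun a => (sconv (Θsys p Δ D) (Θsys p Δ D₂)) a x)
      (R := fun σ z' => Ψ₂ p Δ (sconv D D₂) σ (x z')) hQQs
      (fun σ hσ z' => hconv σ hσ x z')
    exact (d1 α hα z).trans (d2 α hα z).symm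
  · -- invertibility
    have hE2Ds := E1_to_E2 hΔ (Ψ₂ p Δ (hsInv D)) (Ψ₁ p Δ D) (Θsys p Δ (hsInv D))
      (Hchar p Δ hΔ (hsInv D) D hDs hD hinv2 hinv1)
    refine ⟨Θsys p Δ (hsInv D), ?_, ?_⟩
    · exact theta_inv hΔ hE2D
        (E2_to_E3 hΔ (Ψ₂ p Δ (hsInv D)) (Ψ₁ p Δ (hsInv D)) (Ψ₁ p Δ D)
          (Θsys p Δ (hsInv D)) hE2Ds (psi_inv_applied hΨ₁ hΔ hD hDs hinv1))
        (psi_inv_applied hΨ₂ hΔ hD hDs hinv1)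
    · exact theta_inv hΔ hE2Ds hE3D (psi_inv_applied hΨ₂ hΔ hDs hD hinv2)
  · -- Leibniz
    intro a m α hα
    have hX := leib_starX hΔ hE3D ((hΨ₂ p Δ hΔ D hD).2.2.2.2.1) a m
    have hY := leib_starY hΔ (D := D) hE3D a m
    have hQQs := psi_inv_applied hΨ₁ hΔ hD hDs hinv1
    apply LinearMap.ext; intro z
    have d1 := star_det hΔ (Q := Ψ₁ p Δ D) (Qs := Ψ₁ p Δ (hsInv D))
      (T := fun δ => fapply (Θsys p Δ D) (smul' a m) δ)
      (R := fun ε z' => smul' (fapply D a) (fapply (Ψ₂ p Δ D) (fun t => (m t) z')) ε)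
      hQQs hX
    have d2 := star_det hΔ (Q := Ψ₁ p Δ D) (Qs := Ψ₁ p Δ (hsInv D))
      (T := fun δ => smul' (fapply D a) (fapply (Θsys p Δ D) m) δ)
      (R := fun ε z' => smul' (fapply D a) (fapply (Ψ₂ p Δ D) (fun t => (m t) z')) ε)
      hQQs hY
    exact (d1 α hα z).trans (d2 α hα z).symm

end Assemble
/-- Let `(E,Ψ₁)` and `(F,Ψ₂)` be left pre-HS-modules over `A/k`.
(1) For every `p`, every non-empty co-ideal `Δ ⊆ ℕ^p` and every `D ∈ HS^p_k(A;Δ)`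
(with inverse `D*`), there is a unique `k[[s]]_Δ`-linear automorphism `Θ` of
`Hom_A(E,F)[[s]]_Δ`, congruent to the identity, such that
`ν(Θ(h)) = Ψ₂^p_Δ(D) ∘ ν(h) ∘ Ψ₁^p_Δ(D*)` for every `h`.  (2) The resulting system
is a left pre-HS-module structure on `Hom_A(E,F)`, and a HS-module structure
whenever `Ψ₁` and `Ψ₂` are. -/
theorem stmt15 (k A E F : Type*) [CommRing k] [CommRing A] [Algebra k A]
    [AddCommGroup E] [Module k E] [Module A E] [IsScalarTower k A E]
    [AddCommGroup F] [Module k F] [Module A F] [IsScalarTower k A F]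
    (Ψ₁ : HSSystem k A E) (Ψ₂ : HSSystem k A F)
    (hΨ₁ : IsPreHSMod k A E Ψ₁) (hΨ₂ : IsPreHSMod k A F Ψ₂) :
    -- (1)
    (∀ (p : ℕ) (Δ : Set (MIdx p)), IsCoideal Δ →
      ∀ D Ds : MIdx p → Module.End k A, IsHS k A Δ D → IsHS k A Δ Ds →
        (∀ α ∈ Δ, sconv D Ds α = (one' : MIdx p → Module.End k A) α) →
        (∀ α ∈ Δ, sconv Ds D α = (one' : MIdx p → Module.End k A) α) →
        ∃ Θ : MIdx p → Module.End k (E →ₗ[A] F),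
          Θ 0 = 1
          ∧ (∀ (hS : MIdx p → (E →ₗ[A] F)) (eS : MIdx p → E), ∀ α ∈ Δ,
              happly (fapply Θ hS) eS α
                = fapply (Ψ₂ p Δ D) (happly hS (fapply (Ψ₁ p Δ Ds) eS)) α)
          ∧ (∃ Θ' : MIdx p → Module.End k (E →ₗ[A] F),
              (∀ α ∈ Δ, sconv Θ Θ' α = (one' : MIdx p → Module.End k (E →ₗ[A] F)) α)
              ∧ (∀ α ∈ Δ, sconv Θ' Θ α = (one' : MIdx p → Module.End k (E →ₗ[A] F)) α))
          ∧ (∀ Θ'' : MIdx p → Module.End k (E →ₗ[A] F),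
              (∀ (hS : MIdx p → (E →ₗ[A] F)) (eS : MIdx p → E), ∀ α ∈ Δ,
                happly (fapply Θ'' hS) eS α
                  = fapply (Ψ₂ p Δ D) (happly hS (fapply (Ψ₁ p Δ Ds) eS)) α) →
              ∀ α ∈ Δ, Θ'' α = Θ α))
    -- (2) pre-HS-module structure
    ∧ (∀ Θsys : HSSystem k A (E →ₗ[A] F),
        (∀ (p : ℕ) (Δ : Set (MIdx p)), IsCoideal Δ →
          ∀ D Ds : MIdx p → Module.End k A, IsHS k A Δ D → IsHS k A Δ Ds →
            (∀ α ∈ Δ, sconv D Ds α = (one' : MIdx p → Module.End k A) α) →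
            (∀ α ∈ Δ, sconv Ds D α = (one' : MIdx p → Module.End k A) α) →
            ∀ (hS : MIdx p → (E →ₗ[A] F)) (eS : MIdx p → E), ∀ α ∈ Δ,
              happly (fapply (Θsys p Δ D) hS) eS α
                = fapply (Ψ₂ p Δ D) (happly hS (fapply (Ψ₁ p Δ Ds) eS)) α) →
        IsPreHSMod k A (E →ₗ[A] F) Θsys)
    -- (2') HS-module structure when `Ψ₁` and `Ψ₂` are HS-module structures
    ∧ (IsHSMod k A E Ψ₁ → IsHSMod k A F Ψ₂ →
        ∀ Θsys : HSSystem k A (E →ₗ[A] F),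
        (∀ (p : ℕ) (Δ : Set (MIdx p)), IsCoideal Δ →
          ∀ D Ds : MIdx p → Module.End k A, IsHS k A Δ D → IsHS k A Δ Ds →
            (∀ α ∈ Δ, sconv D Ds α = (one' : MIdx p → Module.End k A) α) →
            (∀ α ∈ Δ, sconv Ds D α = (one' : MIdx p → Module.End k A) α) →
            ∀ (hS : MIdx p → (E →ₗ[A] F)) (eS : MIdx p → E), ∀ α ∈ Δ,
              happly (fapply (Θsys p Δ D) hS) eS α
                = fapply (Ψ₂ p Δ D) (happly hS (fapply (Ψ₁ p Δ Ds) eS)) α) →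
        IsHSMod k A (E →ₗ[A] F) Θsys) := by
  classical
  refine ⟨?_, ?_, ?_⟩
  · -- part (1)
    intro p Δ hΔ D Ds hD hDs hinv1 hinv2
    have hsm := theta_smul hΨ₁ hΨ₂ hΔ hD hDs hinv1
    have hsm' := theta_smul hΨ₁ hΨ₂ hΔ hDs hD hinv2
    have hE2 := mkTheta_E2 Δ (Ψ₂ p Δ D) (Ψ₁ p Δ Ds) hsm
    have hE2' := mkTheta_E2 Δ (Ψ₂ p Δ Ds) (Ψ₁ p Δ D) hsm'
    refine ⟨mkTheta Δ (Ψ₂ p Δ D) (Ψ₁ p Δ Ds) hsm, ?_, ?_,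
      ⟨mkTheta Δ (Ψ₂ p Δ Ds) (Ψ₁ p Δ D) hsm', ?_, ?_⟩, ?_⟩
    · apply LinearMap.ext; intro x; apply LinearMap.ext; intro z
      rw [hE2 0 (zero_mem_coideal hΔ) x z, sum_Iic_zero,
        show ((0 : MIdx p) - 0) = 0 from tsub_zero 0,
        (hΨ₂ p Δ hΔ D hD).1, (hΨ₁ p Δ hΔ Ds hDs).1]
      simp
    · exact E2_to_E1 hΔ (Ψ₂ p Δ D) (Ψ₁ p Δ Ds) _ hE2
    · exact theta_inv hΔ hE2
        (E2_to_E3 hΔ (Ψ₂ p Δ Ds) (Ψ₁ p Δ Ds) (Ψ₁ p Δ D) _ hE2'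
          (psi_inv_applied hΨ₁ hΔ hD hDs hinv1))
        (psi_inv_applied hΨ₂ hΔ hD hDs hinv1)
    · exact theta_inv hΔ hE2'
        (E2_to_E3 hΔ (Ψ₂ p Δ D) (Ψ₁ p Δ D) (Ψ₁ p Δ Ds) _ hE2
          (psi_inv_applied hΨ₁ hΔ hDs hD hinv2))
        (psi_inv_applied hΨ₂ hΔ hDs hD hinv2)
    · intro Θ'' hchar α hα
      have hE2'' := E1_to_E2 hΔ (Ψ₂ p Δ D) (Ψ₁ p Δ Ds) Θ'' hchar
      apply LinearMap.ext; intro x; apply LinearMap.ext; intro z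
      rw [hE2'' α hα x z, hE2 α hα x z]
  · -- part (2)
    intro Θsys Hchar p Δ hΔ D hD
    obtain ⟨c1, c2, c3, c4, c5⟩ := theta_clauses hΨ₁ hΨ₂ Θsys Hchar p Δ hΔ D hD
    refine ⟨c1, c2, c3, c4, c5, ?_⟩
    intro q nab hnab φ hconst e he x
    exact theta_subst hΨ₁ hΨ₂ Θsys Hchar hΔ hD hnab φ
      (fun e' he' z => (hΨ₁ p Δ hΔ D hD).2.2.2.2.2 q nab hnab φ hconst e' he' z)
      (fun e' he' y => (hΨ₂ p Δ hΔ D hD).2.2.2.2.2 q nab hnab φ hconst e' he' y)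
      e he x
  · -- part (2')
    intro hHS₁ hHS₂ Θsys Hchar p Δ hΔ D hD
    obtain ⟨c1, c2, c3, c4, c5⟩ := theta_clauses hΨ₁ hΨ₂ Θsys Hchar p Δ hΔ D hD
    refine ⟨c1, c2, c3, c4, c5, ?_⟩
    intro q nab hnab φ e he x
    exact theta_subst hΨ₁ hΨ₂ Θsys Hchar hΔ hD hnab φ
      (fun e' he' z => (hHS₁ p Δ hΔ D hD).2.2.2.2.2 q nab hnab φ e' he' z)
      (fun e' he' y => (hHS₂ p Δ hΔ D hD).2.2.2.2.2 q nab hnab φ e' he' y)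
      e he x

end HS
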